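/- arXiv:1009.4036 — 7 statements merged into one kernel-verified Lean document; each statement's English description precedes it below -/
import Mathlib

section
/- The Gram matrix determinant D_k(n) = det(G_{kn}), where G_{kn}(π,σ) = n^{|π∨σ|} for partitions π,σ of {1,...,k}, is a monic polynomial in n of degree s_k = Σ_{π ∈ P(k)} |π|, where |π| denotes the number of blocks and π∨σ is the join in the partition lattice. -/
open Finset Polynomial

/-- A set partition of `{1,…,k}` is encoded as a `Setoid (Fin k)`; the join `⊔` in the
lattice of setoids is exactly the join in the partition lattice. -/
noncomputable instance setoidFintype {k : ℕ} : Fintype (Setoid (Fin k)) := by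
  have : Finite (Setoid (Fin k)) :=
    Finite.of_injective (fun s => s.r)
      (fun s t h => Setoid.ext (fun a b => by rw [show s.r = t.r from h]))
  exact Fintype.ofFinite _

noncomputable instance setoidDecEq {k : ℕ} : DecidableEq (Setoid (Fin k)) := Classical.decEq _

noncomputable instance setoidSubtypeFintype {k : ℕ} {p : Setoid (Fin k) → Prop} :
    Fintype {π : Setoid (Fin k) // p π} := Fintype.ofFinite _

/-- The number of blocks of a set partition. -/
noncomputable def nblocks {k : ℕ} (π : Setoid (Fin k)) : ℕ := Nat.card (Quotient π)

lemma nblocks_anti {k : ℕ} {π τ : Setoid (Fin k)} (h : π ≤ τ) : nblocks τ ≤ nblocks π := by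
  have hf : Function.Surjective
      (Quot.map id (fun a b hab => h hab) : Quotient π → Quotient τ) := by
    intro q
    obtain ⟨a, rfl⟩ := q.exists_rep
    exact ⟨Quot.mk _ a, rfl⟩
  exact Nat.card_le_card_of_surjective _ hf

lemma eq_of_le_of_nblocks_eq {k : ℕ} {π τ : Setoid (Fin k)} (h : π ≤ τ)
    (hc : nblocks τ = nblocks π) : π = τ := by
  set f : Quotient π → Quotient τ := Quot.map id (fun a b hab => h hab) with hfdef
  have hf : Function.Surjective f := by
    intro q
    obtain ⟨a, rfl⟩ := q.exists_rep
    exact ⟨Quot.mk _ a, rfl⟩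
  have hb : Function.Bijective f :=
    (Nat.bijective_iff_surjective_and_card f).2 ⟨hf, hc.symm⟩
  refine le_antisymm h (fun a b hab => ?_)
  have h1 : f (Quot.mk _ a) = f (Quot.mk _ b) := Quot.sound hab
  exact Quotient.exact (hb.1 h1)

lemma sum_nblocks_lt {k : ℕ} (σ : Equiv.Perm (Setoid (Fin k))) (hσ : σ ≠ 1) :
    ∑ π : Setoid (Fin k), nblocks (σ π ⊔ π) < ∑ π : Setoid (Fin k), nblocks π := by
  have hle : ∀ π : Setoid (Fin k), nblocks (σ π ⊔ π) ≤ nblocks π :=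
    fun π => nblocks_anti le_sup_right
  by_contra hcon
  push_neg at hcon
  have heq : ∑ π : Setoid (Fin k), nblocks (σ π ⊔ π) = ∑ π : Setoid (Fin k), nblocks π :=
    le_antisymm (Finset.sum_le_sum fun π _ => hle π) hcon
  have hptwise : ∀ π : Setoid (Fin k), nblocks (σ π ⊔ π) = nblocks π := by
    have := (Finset.sum_eq_sum_iff_of_le (fun π _ => hle π)).1 heq
    exact fun π => this π (Finset.mem_univ π)
  have hsup : ∀ π : Setoid (Fin k), σ π ≤ π := by
    intro π
    have : π = σ π ⊔ π := eq_of_le_of_nblocks_eq le_sup_right (hptwise π)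
    exact le_of_sup_eq this.symm
  -- now ∑ nblocks (σ π) = ∑ nblocks π, with nblocks π ≤ nblocks (σ π) pointwise
  have hsum2 : ∑ π : Setoid (Fin k), nblocks π = ∑ π : Setoid (Fin k), nblocks (σ π) :=
    (Equiv.sum_comp σ nblocks).symm
  have hle2 : ∀ π ∈ Finset.univ, nblocks π ≤ nblocks (σ π) :=
    fun π _ => nblocks_anti (hsup π)
  have hpt2 := (Finset.sum_eq_sum_iff_of_le hle2).1 hsum2
  apply hσ
  ext π
  have : σ π = π := eq_of_le_of_nblocks_eq (hsup π) (hpt2 π (Finset.mem_univ π))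
  rw [this]; rfl

/-- The Gram determinant `D_k(n) = det(n^{|π∨σ|})` is a monic polynomial in `n`
of degree `s_k = Σ_{π ∈ P(k)} |π|`. -/
theorem gram_det_monic_of_degree_sum_blocks (k : ℕ) :
    (Matrix.det (Matrix.of fun π σ : Setoid (Fin k) =>
        (X : ℤ[X]) ^ nblocks (π ⊔ σ))).Monic ∧
    (Matrix.det (Matrix.of fun π σ : Setoid (Fin k) =>
        (X : ℤ[X]) ^ nblocks (π ⊔ σ))).natDegree = ∑ π : Setoid (Fin k), nblocks π := by
  set s : ℕ := ∑ π : Setoid (Fin k), nblocks π with hs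
  set p : ℤ[X] := Matrix.det (Matrix.of fun π σ : Setoid (Fin k) =>
        (X : ℤ[X]) ^ nblocks (π ⊔ σ)) with hp
  have hdsum : ∀ σ : Equiv.Perm (Setoid (Fin k)),
      ∑ π : Setoid (Fin k), nblocks (σ π ⊔ π) ≤ s :=
    fun σ => Finset.sum_le_sum fun π _ => nblocks_anti le_sup_right
  have hterm : ∀ σ : Equiv.Perm (Setoid (Fin k)),
      (∏ π : Setoid (Fin k), (X : ℤ[X]) ^ nblocks (σ π ⊔ π)) =
        X ^ (∑ π : Setoid (Fin k), nblocks (σ π ⊔ π)) :=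
    fun σ => Finset.prod_pow_eq_pow_sum _ _ _
  have hdet : p = ∑ σ : Equiv.Perm (Setoid (Fin k)),
      (Equiv.Perm.sign σ : ℤ) • X ^ (∑ π : Setoid (Fin k), nblocks (σ π ⊔ π)) := by
    rw [hp, Matrix.det_apply]
    refine Finset.sum_congr rfl fun σ _ => ?_
    rw [Units.smul_def, ← hterm σ]
    rfl
  have hcoeff : p.coeff s = 1 := by
    rw [hdet, Polynomial.finset_sum_coeff]
    rw [Finset.sum_eq_single (1 : Equiv.Perm (Setoid (Fin k)))]
    · simp [hs]
    · intro σ _ hσ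
      rw [Polynomial.coeff_smul, Polynomial.coeff_X_pow,
        if_neg (by exact fun h => absurd h.symm (Nat.ne_of_lt (sum_nblocks_lt σ hσ)))]
      simp
    · intro h; exact absurd (Finset.mem_univ _) h
  have hdeg : p.natDegree ≤ s := by
    rw [hdet]
    refine Polynomial.natDegree_sum_le_of_forall_le _ _ fun σ _ => ?_
    refine le_trans (Polynomial.natDegree_smul_le _ _) ?_
    rw [Polynomial.natDegree_X_pow]
    exact hdsum σ
  have hne : p ≠ 0 := fun h => by simp [h] at hcoeff
  have hdeg' : p.natDegree = s :=
    le_antisymm hdeg (Polynomial.le_natDegree_of_ne_zero (by rw [hcoeff]; exact one_ne_zero))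
  refine ⟨?_, hdeg'⟩
  rw [Polynomial.Monic, Polynomial.leadingCoeff, hdeg', hcoeff]
end

section
/- The determinant of the Gram matrix G_{kn}(π,σ) = n^{|π∨σ|}, indexed by all set partitions of {1,...,k}, equals the product over all partitions π of {1,...,k} of the falling factorial n(n-1)⋯(n-|π|+1) = n!/(n-|π|)!. -/
open Finset Polynomial

lemma int_prod_descFactorial (m n : ℕ) :
    ∏ s ∈ Finset.range m, ((n : ℤ) - (s : ℤ)) = (n.descFactorial m : ℤ) := by
  induction m with
  | zero => simp
  | succ m ih =>
      rw [Finset.prod_range_succ, ih, Nat.descFactorial_succ]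
      rcases le_or_gt m n with h | h
      · push_cast [h]; ring
      · rw [Nat.descFactorial_eq_zero_iff_lt.2 h]
        simp

def mapQ {k : ℕ} {σ τ : Setoid (Fin k)} (h : σ ≤ τ) : Quotient σ → Quotient τ :=
  Quotient.lift (Quotient.mk τ) (fun _ _ hab => Quotient.sound (h hab))

open scoped Classical in
lemma count {k : ℕ} (n : ℕ) (σ : Setoid (Fin k)) :
    n ^ nblocks σ =
      ∑ τ : Setoid (Fin k), if σ ≤ τ then n.descFactorial (nblocks τ) else 0 := by
  classical
  have hbij : Function.Bijective
      (fun x : Σ τ : {τ : Setoid (Fin k) // σ ≤ τ}, (Quotient τ.1 ↪ Fin n) =>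
        (fun q => x.2 (mapQ x.1.2 q) : Quotient σ → Fin n)) := by
    constructor
    · rintro ⟨⟨τ, hτ⟩, g⟩ ⟨⟨τ', hτ'⟩, g'⟩ hfg
      simp only at hfg
      have hpt : ∀ a : Fin k, g (Quotient.mk τ a) = g' (Quotient.mk τ' a) := fun a =>
        congrFun hfg (Quotient.mk σ a)
      have hττ' : τ = τ' := by
        apply Setoid.ext
        intro a b
        constructor
        · intro h
          have : g (Quotient.mk τ a) = g (Quotient.mk τ b) :=
            congrArg g (Quotient.sound h)
          rw [hpt a, hpt b] at this
          exact Quotient.exact (g'.injective this)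
        · intro h
          have : g' (Quotient.mk τ' a) = g' (Quotient.mk τ' b) :=
            congrArg g' (Quotient.sound h)
          rw [← hpt a, ← hpt b] at this
          exact Quotient.exact (g.injective this)
      subst hττ'
      have hg : g = g' := by
        ext q
        induction q using Quotient.ind with
        | _ a => exact congrArg Fin.val (hpt a)
      subst hg
      rfl
    · intro f
      refine ⟨⟨⟨Setoid.ker (fun a => f (Quotient.mk σ a)), fun a b hab =>
          congrArg f (Quotient.sound hab)⟩,
        ⟨Quotient.lift (fun a => f (Quotient.mk σ a)) (fun _ _ hab => hab), ?_⟩⟩, ?_⟩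
      · intro q q'
        induction q using Quotient.ind with
        | _ a =>
          induction q' using Quotient.ind with
          | _ b => exact fun h => Quotient.sound h
      · funext q
        induction q using Quotient.ind with
        | _ a => rfl
  have hcard := Nat.card_eq_of_bijective _ hbij
  letI : ∀ τ : Setoid (Fin k), Fintype (Quotient τ) := fun τ => Fintype.ofFinite _
  rw [Nat.card_fun] at hcard
  have h1 : Nat.card (Σ τ : {τ : Setoid (Fin k) // σ ≤ τ}, (Quotient τ.1 ↪ Fin n)) =
      ∑ τ : {τ : Setoid (Fin k) // σ ≤ τ}, n.descFactorial (nblocks τ.1) := by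
    rw [Nat.card_eq_fintype_card]
    rw [Fintype.card_sigma]
    congr 1
    funext τ
    rw [Fintype.card_embedding_eq, Fintype.card_fin]
    congr 1
    exact (Nat.card_eq_fintype_card).symm
  rw [h1] at hcard
  have h2 : (∑ τ : {τ : Setoid (Fin k) // σ ≤ τ}, n.descFactorial (nblocks τ.1)) =
      ∑ τ : Setoid (Fin k), if σ ≤ τ then n.descFactorial (nblocks τ) else 0 := by
    rw [← Finset.sum_filter]
    exact (Finset.sum_subtype (Finset.univ.filter (σ ≤ ·)) (fun x => by simp)
      (fun τ => n.descFactorial (nblocks τ))).symm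
  rw [h2] at hcard
  have hn : Nat.card (Fin n) = n := by simp
  rw [hn] at hcard
  exact hcard.symm

open scoped Classical in
lemma key {k : ℕ} (σ : Setoid (Fin k)) :
    (X : ℤ[X]) ^ nblocks σ =
      ∑ τ : Setoid (Fin k), if σ ≤ τ then
        ∏ s ∈ Finset.range (nblocks τ), ((X : ℤ[X]) - C (s : ℤ)) else 0 := by
  rw [← sub_eq_zero]
  apply Polynomial.eq_zero_of_infinite_isRoot
  apply Set.infinite_of_injective_forall_mem (f := (Nat.cast : ℕ → ℤ)) Nat.cast_injective
  intro n
  simp only [Set.mem_setOf_eq, IsRoot, eval_sub, eval_pow, eval_X, eval_finset_sum]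
  rw [sub_eq_zero]
  have hterm : ∀ τ : Setoid (Fin k),
      ((if σ ≤ τ then ∏ s ∈ Finset.range (nblocks τ), ((X : ℤ[X]) - C (s : ℤ))
        else 0).eval (n : ℤ)) =
      (((if σ ≤ τ then n.descFactorial (nblocks τ) else 0 : ℕ) : ℤ)) := by
    intro τ
    split
    · rw [eval_prod]
      simp only [eval_sub, eval_X, eval_C]
      exact int_prod_descFactorial _ n
    · simp
  simp only [hterm]
  exact_mod_cast count n σ

/-- The identity equivalence between a partial order and its linear extension. -/
noncomputable def toLE {k : ℕ} : Setoid (Fin k) ≃ LinearExtension (Setoid (Fin k)) where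
  toFun x := toLinearExtension x
  invFun x := show Setoid (Fin k) from x
  left_inv _ := rfl
  right_inv _ := rfl

/-- Jackson–Lindström: `det(n^{|π∨σ|}) = ∏_{π ∈ P(k)} n(n-1)⋯(n-|π|+1)`,
as an identity of polynomials in `n`. -/
theorem gram_det_eq_prod_descFactorial (k : ℕ) :
    Matrix.det (Matrix.of fun π σ : Setoid (Fin k) =>
        (X : ℤ[X]) ^ nblocks (π ⊔ σ)) =
      ∏ π : Setoid (Fin k), ∏ s ∈ Finset.range (nblocks π), ((X : ℤ[X]) - C (s : ℤ)) := by
  classical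
  set g : Setoid (Fin k) → ℤ[X] :=
    fun τ => ∏ s ∈ Finset.range (nblocks τ), ((X : ℤ[X]) - C (s : ℤ)) with hg
  set Z : Matrix (Setoid (Fin k)) (Setoid (Fin k)) ℤ[X] :=
    Matrix.of (fun π τ => if π ≤ τ then 1 else 0) with hZ
  set W : Matrix (Setoid (Fin k)) (Setoid (Fin k)) ℤ[X] :=
    Matrix.of (fun τ σ => if σ ≤ τ then g τ else 0) with hW
  have hMZW : Matrix.of (fun π σ : Setoid (Fin k) => (X : ℤ[X]) ^ nblocks (π ⊔ σ)) = Z * W := by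
    refine Matrix.ext fun π σ => ?_
    rw [Matrix.mul_apply]
    simp only [Matrix.of_apply, hZ, hW]
    rw [key (π ⊔ σ)]
    apply Finset.sum_congr rfl
    intro τ _
    by_cases h1 : π ≤ τ <;> by_cases h2 : σ ≤ τ <;>
      simp [Matrix.of_apply, h1, h2, sup_le_iff, hg]
  have hWD : W = Matrix.diagonal g * Z.transpose := by
    ext τ σ
    rw [Matrix.diagonal_mul]
    simp only [Matrix.of_apply, hZ, hW, Matrix.transpose_apply, mul_ite, mul_one, mul_zero]
  have hZdet : Z.det = 1 := by
    letI : Fintype (LinearExtension (Setoid (Fin k))) := setoidFintype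
    letI : DecidableEq (LinearExtension (Setoid (Fin k))) := setoidDecEq
    refine (Matrix.det_reindex_self (toLE (k := k)) Z).symm.trans ?_
    refine Eq.trans (Matrix.det_of_upperTriangular (M := Matrix.reindex toLE toLE Z) ?_) ?_
    · intro i j hij
      simp only [Matrix.reindex_apply, Matrix.submatrix_apply, Matrix.of_apply, hZ]
      rw [if_neg]
      intro hle
      exact absurd (toLinearExtension.monotone hle) (not_le.mpr hij)
    · apply Finset.prod_eq_one
      intro τ _
      simp only [Matrix.reindex_apply, Matrix.submatrix_apply, Matrix.of_apply, hZ]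
      rw [if_pos le_rfl]
  rw [hMZW, Matrix.det_mul, hZdet, one_mul, hWD, Matrix.det_mul, Matrix.det_transpose,
    hZdet, mul_one, Matrix.det_diagonal]
end

section
/- The sum over all noncrossing partitions π of {1,...,k} of the number of blocks |π| equals (1/2)·binom(2k,k). -/
open Finset Polynomial

/-- `π` is a pair partition (perfect matching): every point has a unique partner. -/
def IsPairing {m : ℕ} (π : Setoid (Fin m)) : Prop :=
  ∀ i, ∃ j, j ≠ i ∧ π.r i j ∧ ∀ l, π.r i l → l = i ∨ l = j

/-- `π` is noncrossing: there are no `a < b < c < d` with `a ∼ c`, `b ∼ d`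
lying in different blocks. -/
def IsNoncrossing {m : ℕ} (π : Setoid (Fin m)) : Prop :=
  ¬ ∃ a b c d : Fin m, a < b ∧ b < c ∧ c < d ∧ π.r a c ∧ π.r b d ∧ ¬ π.r a b

section basic

lemma rel_comm {m : ℕ} (π : Setoid (Fin m)) (x y : Fin m) : π.r x y ↔ π.r y x :=
  ⟨π.symm, π.symm⟩

lemma comap_nc {a m : ℕ} (e : Fin a → Fin m) (he : StrictMono e) {π : Setoid (Fin m)}
    (h : IsNoncrossing π) : IsNoncrossing (Setoid.comap e π) := by
  rintro ⟨x, y, z, w, h1, h2, h3, h4, h5, h6⟩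
  exact h ⟨e x, e y, e z, e w, he h1, he h2, he h3, h4, h5, h6⟩

lemma mk_eq_iff {m : ℕ} (π : Setoid (Fin m)) (u v : Fin m) :
    Quotient.mk π u = Quotient.mk π v ↔ π.r u v :=
  ⟨Quotient.exact, Quotient.sound⟩

end basic

section glueA

variable {n : ℕ} (π : Setoid (Fin n))

def fA (x : Fin (n+1)) : Quotient π ⊕ Unit :=
  if h : x.val = 0 then Sum.inr ()
  else Sum.inl (Quotient.mk π ⟨x.val - 1, by have := x.isLt; omega⟩)

def glueA : Setoid (Fin (n+1)) := Setoid.ker (fA π)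

lemma fA_zero (x : Fin (n+1)) (hx : x.val = 0) : fA π x = Sum.inr () := dif_pos hx

lemma fA_pos (x : Fin (n+1)) (hx : 1 ≤ x.val) :
    fA π x = Sum.inl (Quotient.mk π ⟨x.val - 1, by have := x.isLt; omega⟩) :=
  dif_neg (by omega)

lemma glueA_rel (x y : Fin (n+1)) : (glueA π).r x y ↔ fA π x = fA π y := Iff.rfl

lemma glueA_rel_pos (x y : Fin (n+1)) (hx : 1 ≤ x.val) (hy : 1 ≤ y.val) :
    (glueA π).r x y ↔ π.r ⟨x.val - 1, by have := x.isLt; omega⟩ ⟨y.val - 1, by have := y.isLt; omega⟩ := by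
  rw [glueA_rel, fA_pos π x hx, fA_pos π y hy]
  simp [mk_eq_iff]

lemma glueA_rel_zero (x y : Fin (n+1)) (hx : x.val = 0) (hy : 1 ≤ y.val) :
    ¬ (glueA π).r x y := by
  rw [glueA_rel, fA_zero π x hx, fA_pos π y hy]
  simp

lemma fA_surj : Function.Surjective (fA π) := by
  rintro (q | u)
  · refine Quotient.inductionOn q fun v => ?_
    refine ⟨⟨v.val + 1, by have := v.isLt; omega⟩, ?_⟩
    rw [fA_pos π _ (by simp)]
    exact congrArg (fun u => Sum.inl (Quotient.mk π u)) (Fin.ext (by simp))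
  · exact ⟨⟨0, by omega⟩, fA_zero π _ rfl⟩

lemma nblocks_glueA : nblocks (glueA π) = nblocks π + 1 := by
  unfold nblocks glueA
  rw [Nat.card_congr (Setoid.quotientKerEquivOfSurjective _ (fA_surj π)), Nat.card_sum]
  congr 1
  exact Nat.card_unique

lemma glueA_nc (h : IsNoncrossing π) : IsNoncrossing (glueA π) := by
  rintro ⟨x, y, z, w, hxy, hyz, hzw, rxz, ryw, nxy⟩
  have hxy' : x.val < y.val := hxy
  have hyz' : y.val < z.val := hyz
  have hzw' : z.val < w.val := hzw
  have hx : 1 ≤ x.val := by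
    by_contra h0
    have hx0 : x.val = 0 := by omega
    rw [glueA_rel, fA_zero π x hx0, fA_pos π z (by omega)] at rxz
    cases rxz
  have hw := w.isLt
  apply h
  refine ⟨⟨x.val - 1, by omega⟩, ⟨y.val - 1, by omega⟩, ⟨z.val - 1, by omega⟩,
    ⟨w.val - 1, by omega⟩, ?_, ?_, ?_, ?_, ?_, ?_⟩
  · show (x.val - 1 : ℕ) < y.val - 1; omega
  · show (y.val - 1 : ℕ) < z.val - 1; omega
  · show (z.val - 1 : ℕ) < w.val - 1; omega
  · exact (glueA_rel_pos π x z (by omega) (by omega)).mp rxz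
  · exact (glueA_rel_pos π y w (by omega) (by omega)).mp ryw
  · exact fun hr => nxy ((glueA_rel_pos π x y (by omega) (by omega)).mpr hr)

end glueA

lemma rel_of_eq {α : Sort*} (π : Setoid α) {u v : α} (h : u = v) : π.r u v := h ▸ π.refl u

section glueB

variable {n a : ℕ} (ha : a < n) (π1 : Setoid (Fin a)) (π2 : Setoid (Fin (n - a)))

def fB (x : Fin (n+1)) : Quotient π1 ⊕ Quotient π2 :=
  if h1 : 1 ≤ x.val ∧ x.val ≤ a then Sum.inl (Quotient.mk π1 ⟨x.val - 1, by omega⟩)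
  else if h2 : x.val = 0 then Sum.inr (Quotient.mk π2 ⟨0, by omega⟩)
  else Sum.inr (Quotient.mk π2 ⟨x.val - (a+1), by have := x.isLt; omega⟩)

lemma fB_lo (x : Fin (n+1)) (h1 : 1 ≤ x.val) (h2 : x.val ≤ a) :
    fB ha π1 π2 x = Sum.inl (Quotient.mk π1 ⟨x.val - 1, by omega⟩) := dif_pos ⟨h1, h2⟩

lemma fB_zero (x : Fin (n+1)) (hx : x.val = 0) :
    fB ha π1 π2 x = Sum.inr (Quotient.mk π2 ⟨0, by omega⟩) := by
  unfold fB
  rw [dif_neg (by omega), dif_pos hx]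

lemma fB_hi (x : Fin (n+1)) (hx : a + 1 ≤ x.val) :
    fB ha π1 π2 x = Sum.inr (Quotient.mk π2 ⟨x.val - (a+1), by have := x.isLt; omega⟩) := by
  unfold fB
  rw [dif_neg (by omega), dif_neg (by omega)]

def glueB : Setoid (Fin (n+1)) := Setoid.ker (fB ha π1 π2)

lemma glueB_rel (x y : Fin (n+1)) :
    (glueB ha π1 π2).r x y ↔ fB ha π1 π2 x = fB ha π1 π2 y := Iff.rfl

lemma glueB_rel_lo_lo (x y : Fin (n+1)) (hx1 : 1 ≤ x.val) (hx2 : x.val ≤ a)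
    (hy1 : 1 ≤ y.val) (hy2 : y.val ≤ a) :
    (glueB ha π1 π2).r x y ↔ π1.r ⟨x.val - 1, by omega⟩ ⟨y.val - 1, by omega⟩ := by
  rw [glueB_rel, fB_lo ha π1 π2 x hx1 hx2, fB_lo ha π1 π2 y hy1 hy2]
  simp [mk_eq_iff]

lemma glueB_rel_hi_hi (x y : Fin (n+1)) (hx : a + 1 ≤ x.val) (hy : a + 1 ≤ y.val) :
    (glueB ha π1 π2).r x y ↔
      π2.r ⟨x.val - (a+1), by have := x.isLt; omega⟩ ⟨y.val - (a+1), by have := y.isLt; omega⟩ := by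
  rw [glueB_rel, fB_hi ha π1 π2 x hx, fB_hi ha π1 π2 y hy]
  simp [mk_eq_iff]

lemma glueB_rel_zero_hi (x y : Fin (n+1)) (hx : x.val = 0) (hy : a + 1 ≤ y.val) :
    (glueB ha π1 π2).r x y ↔
      π2.r ⟨0, by omega⟩ ⟨y.val - (a+1), by have := y.isLt; omega⟩ := by
  rw [glueB_rel, fB_zero ha π1 π2 x hx, fB_hi ha π1 π2 y hy]
  simp [mk_eq_iff]

lemma glueB_not_rel_zero_lo (x y : Fin (n+1)) (hx : x.val = 0) (hy1 : 1 ≤ y.val)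
    (hy2 : y.val ≤ a) : ¬ (glueB ha π1 π2).r x y := by
  rw [glueB_rel, fB_zero ha π1 π2 x hx, fB_lo ha π1 π2 y hy1 hy2]
  simp

lemma glueB_not_rel_lo_hi (x y : Fin (n+1)) (hx1 : 1 ≤ x.val) (hx2 : x.val ≤ a)
    (hy : a + 1 ≤ y.val) : ¬ (glueB ha π1 π2).r x y := by
  rw [glueB_rel, fB_lo ha π1 π2 x hx1 hx2, fB_hi ha π1 π2 y hy]
  simp

lemma fB_surj : Function.Surjective (fB ha π1 π2) := by
  rintro (q | q)
  · refine Quotient.inductionOn q fun v => ?_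
    have hv := v.isLt
    refine ⟨⟨v.val + 1, by omega⟩, ?_⟩
    rw [fB_lo ha π1 π2 _ (by show 1 ≤ v.val + 1; omega) (by show v.val + 1 ≤ a; omega)]
    exact congrArg (fun u => Sum.inl (Quotient.mk π1 u)) (Fin.ext (by simp))
  · refine Quotient.inductionOn q fun v => ?_
    have hv := v.isLt
    refine ⟨⟨v.val + (a + 1), by omega⟩, ?_⟩
    rw [fB_hi ha π1 π2 _ (by show a + 1 ≤ v.val + (a+1); omega)]
    exact congrArg (fun u => Sum.inr (Quotient.mk π2 u)) (Fin.ext (by simp))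

lemma nblocks_glueB : nblocks (glueB ha π1 π2) = nblocks π1 + nblocks π2 := by
  unfold nblocks glueB
  rw [Nat.card_congr (Setoid.quotientKerEquivOfSurjective _ (fB_surj ha π1 π2)), Nat.card_sum]

lemma glueB_nc (h1 : IsNoncrossing π1) (h2 : IsNoncrossing π2) :
    IsNoncrossing (glueB ha π1 π2) := by
  rintro ⟨x, y, z, w, hxy, hyz, hzw, rxz, ryw, nxy⟩
  have hxy' : x.val < y.val := hxy
  have hyz' : y.val < z.val := hyz
  have hzw' : z.val < w.val := hzw
  have hwlt := w.isLt
  by_cases hx0 : x.val = 0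
  · have hz : a + 1 ≤ z.val := by
      by_contra hc
      have hr := rxz
      rw [glueB_rel, fB_zero ha π1 π2 x hx0, fB_lo ha π1 π2 z (by omega) (by omega)] at hr
      cases hr
    have hy : a + 1 ≤ y.val := by
      by_contra hc
      have hr := ryw
      rw [glueB_rel, fB_lo ha π1 π2 y (by omega) (by omega), fB_hi ha π1 π2 w (by omega)] at hr
      cases hr
    have Rxz := (glueB_rel_zero_hi ha π1 π2 x z hx0 hz).mp rxz
    have Ryw := (glueB_rel_hi_hi ha π1 π2 y w hy (by omega)).mp ryw
    have Nxy : ¬ π2.r ⟨0, by omega⟩ ⟨y.val - (a+1), by omega⟩ :=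
      fun hr => nxy ((glueB_rel_zero_hi ha π1 π2 x y hx0 hy).mpr hr)
    have hy' : a + 1 < y.val := by
      by_contra hc
      exact Nxy (rel_of_eq π2 (Fin.ext (by simp; omega)))
    apply h2
    refine ⟨⟨0, by omega⟩, ⟨y.val - (a+1), by omega⟩, ⟨z.val - (a+1), by omega⟩,
      ⟨w.val - (a+1), by omega⟩, ?_, ?_, ?_, Rxz, Ryw, Nxy⟩
    · show (0 : ℕ) < y.val - (a+1); omega
    · show (y.val - (a+1) : ℕ) < z.val - (a+1); omega
    · show (z.val - (a+1) : ℕ) < w.val - (a+1); omega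
  · by_cases hxlo : x.val ≤ a
    · have hz2 : z.val ≤ a := by
        by_contra hc
        have hr := rxz
        rw [glueB_rel, fB_lo ha π1 π2 x (by omega) hxlo, fB_hi ha π1 π2 z (by omega)] at hr
        cases hr
      have hw2 : w.val ≤ a := by
        by_contra hc
        have hr := ryw
        rw [glueB_rel, fB_lo ha π1 π2 y (by omega) (by omega), fB_hi ha π1 π2 w (by omega)] at hr
        cases hr
      apply h1
      refine ⟨⟨x.val - 1, by omega⟩, ⟨y.val - 1, by omega⟩, ⟨z.val - 1, by omega⟩,
        ⟨w.val - 1, by omega⟩, ?_, ?_, ?_,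
        (glueB_rel_lo_lo ha π1 π2 x z (by omega) (by omega) (by omega) (by omega)).mp rxz,
        (glueB_rel_lo_lo ha π1 π2 y w (by omega) (by omega) (by omega) (by omega)).mp ryw,
        fun hr => nxy ((glueB_rel_lo_lo ha π1 π2 x y (by omega) (by omega) (by omega)
          (by omega)).mpr hr)⟩
      · show (x.val - 1 : ℕ) < y.val - 1; omega
      · show (y.val - 1 : ℕ) < z.val - 1; omega
      · show (z.val - 1 : ℕ) < w.val - 1; omega
    · have hx : a + 1 ≤ x.val := by omega
      apply h2
      refine ⟨⟨x.val - (a+1), by omega⟩, ⟨y.val - (a+1), by omega⟩, ⟨z.val - (a+1), by omega⟩,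
        ⟨w.val - (a+1), by omega⟩, ?_, ?_, ?_,
        (glueB_rel_hi_hi ha π1 π2 x z hx (by omega)).mp rxz,
        (glueB_rel_hi_hi ha π1 π2 y w (by omega) (by omega)).mp ryw,
        fun hr => nxy ((glueB_rel_hi_hi ha π1 π2 x y hx (by omega)).mpr hr)⟩
      · show (x.val - (a+1) : ℕ) < y.val - (a+1); omega
      · show (y.val - (a+1) : ℕ) < z.val - (a+1); omega
      · show (z.val - (a+1) : ℕ) < w.val - (a+1); omega

end glueB

lemma rel_congr₀ {α : Sort*} (ρ : Setoid α) {x x' y y' : α} (hx : x = x') (hy : y = y') :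
    ρ.r x y ↔ ρ.r x' y' := by rw [hx, hy]

section bijection

abbrev NCS (n : ℕ) := {π : Setoid (Fin n) // IsNoncrossing π}

abbrev IDX (n : ℕ) := NCS n ⊕ (Σ a : Fin n, NCS a.val × NCS (n - a.val))

def G {n : ℕ} : IDX n → NCS (n+1)
  | Sum.inl p => ⟨glueA p.1, glueA_nc p.1 p.2⟩
  | Sum.inr ⟨a, p1, p2⟩ => ⟨glueB a.isLt p1.1 p2.1, glueB_nc a.isLt p1.1 p2.1 p1.2 p2.2⟩

lemma glueB_rel_zero_j {n a : ℕ} (ha : a < n) (π1 : Setoid (Fin a)) (π2 : Setoid (Fin (n-a))) :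
    (glueB ha π1 π2).r ⟨0, by omega⟩ ⟨a+1, by omega⟩ := by
  refine (glueB_rel_zero_hi ha π1 π2 _ _ rfl (by show a+1 ≤ a+1; omega)).mpr ?_
  exact rel_of_eq π2 (Fin.ext (by show (0:ℕ) = a+1-(a+1); omega))

lemma G_inj {n : ℕ} : Function.Injective (G (n := n)) := by
  intro t1 t2 h
  have hset := congrArg Subtype.val h
  match t1, t2 with
  | Sum.inl p, Sum.inl q =>
    have hset : glueA p.1 = glueA q.1 := hset
    have key : p.1 = q.1 := by
      apply Setoid.ext; intro u v
      have hu := u.isLt; have hv := v.isLt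
      have e : ∀ (π : Setoid (Fin n)) (u v : Fin n), π.r u v ↔
          (glueA π).r ⟨u.val+1, by omega⟩ ⟨v.val+1, by omega⟩ := by
        intro π u v
        refine Iff.symm ((glueA_rel_pos π _ _ (by show 1 ≤ u.val+1; omega)
          (by show 1 ≤ v.val+1; omega)).trans ?_)
        exact rel_congr₀ π (Fin.ext (by show u.val+1-1 = u.val; omega))
          (Fin.ext (by show v.val+1-1 = v.val; omega))
      rw [e p.1 u v, e q.1 u v, hset]
    exact congrArg Sum.inl (Subtype.ext key)
  | Sum.inl p, Sum.inr ⟨a, q1, q2⟩ =>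
    exfalso
    have hset : glueA p.1 = glueB a.isLt q1.1 q2.1 := hset
    have hrel := glueB_rel_zero_j a.isLt q1.1 q2.1
    rw [← hset] at hrel
    exact glueA_rel_zero p.1 _ _ rfl (by show 1 ≤ a.val+1; omega) hrel
  | Sum.inr ⟨a, q1, q2⟩, Sum.inl p =>
    exfalso
    have hset : glueB a.isLt q1.1 q2.1 = glueA p.1 := hset
    have hrel := glueB_rel_zero_j a.isLt q1.1 q2.1
    rw [hset] at hrel
    exact glueA_rel_zero p.1 _ _ rfl (by show 1 ≤ a.val+1; omega) hrel
  | Sum.inr ⟨a, p1, p2⟩, Sum.inr ⟨a', q1, q2⟩ =>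
    have hset : glueB a.isLt p1.1 p2.1 = glueB a'.isLt q1.1 q2.1 := hset
    have hval : a.val = a'.val := by
      by_contra hne
      rcases Nat.lt_or_ge a.val a'.val with hlt | hge
      · have hrel := glueB_rel_zero_j a.isLt p1.1 p2.1
        rw [hset] at hrel
        exact glueB_not_rel_zero_lo a'.isLt q1.1 q2.1 _ _ rfl
          (by show 1 ≤ a.val+1; omega) (by show a.val+1 ≤ a'.val; omega) hrel
      · have hlt : a'.val < a.val := by omega
        have hrel := glueB_rel_zero_j a'.isLt q1.1 q2.1
        rw [← hset] at hrel
        exact glueB_not_rel_zero_lo a.isLt p1.1 p2.1 _ _ rfl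
          (by show 1 ≤ a'.val+1; omega) (by show a'.val+1 ≤ a.val; omega) hrel
    have haa : a = a' := Fin.ext hval
    subst haa
    have h1 : p1.1 = q1.1 := by
      apply Setoid.ext; intro u v
      have hu := u.isLt; have hv := v.isLt
      have e : ∀ (π1 : Setoid (Fin a.val)) (π2 : Setoid (Fin (n - a.val))) (u v : Fin a.val),
          π1.r u v ↔ (glueB a.isLt π1 π2).r ⟨u.val+1, by omega⟩ ⟨v.val+1, by omega⟩ := by
        intro π1 π2 u v
        have hu := u.isLt; have hv := v.isLt
        refine Iff.symm ((glueB_rel_lo_lo a.isLt π1 π2 _ _ (by show 1 ≤ u.val+1; omega)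
          (by show u.val+1 ≤ a.val; omega) (by show 1 ≤ v.val+1; omega)
          (by show v.val+1 ≤ a.val; omega)).trans ?_)
        exact rel_congr₀ π1 (Fin.ext (by show u.val+1-1 = u.val; omega))
          (Fin.ext (by show v.val+1-1 = v.val; omega))
      rw [e p1.1 p2.1 u v, e q1.1 q2.1 u v, hset]
    have h2 : p2.1 = q2.1 := by
      apply Setoid.ext; intro u v
      have hu := u.isLt; have hv := v.isLt
      have e : ∀ (π1 : Setoid (Fin a.val)) (π2 : Setoid (Fin (n - a.val))) (u v : Fin (n - a.val)),
          π2.r u v ↔ (glueB a.isLt π1 π2).r ⟨u.val+(a.val+1), by omega⟩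
            ⟨v.val+(a.val+1), by omega⟩ := by
        intro π1 π2 u v
        have hu := u.isLt; have hv := v.isLt
        refine Iff.symm ((glueB_rel_hi_hi a.isLt π1 π2 _ _ (by show a.val+1 ≤ u.val+(a.val+1); omega)
          (by show a.val+1 ≤ v.val+(a.val+1); omega)).trans ?_)
        exact rel_congr₀ π2 (Fin.ext (by show u.val+(a.val+1)-(a.val+1) = u.val; omega))
          (Fin.ext (by show v.val+(a.val+1)-(a.val+1) = v.val; omega))
      rw [e p1.1 p2.1 u v, e q1.1 q2.1 u v, hset]
    exact congrArg Sum.inr (congrArg (Sigma.mk a) (Prod.ext (Subtype.ext h1) (Subtype.ext h2)))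

end bijection

lemma rel_congr' {m : ℕ} (ρ : Setoid (Fin m)) {x y : Fin m} (x' y' : Fin m)
    (hx : x.val = x'.val) (hy : y.val = y'.val) : ρ.r x y ↔ ρ.r x' y' :=
  rel_congr₀ ρ (Fin.ext hx) (Fin.ext hy)

lemma G_surj {n : ℕ} : Function.Surjective (G (n := n)) := by
  rintro ⟨ρ, hρ⟩
  by_cases hsing : ∀ y : Fin (n+1), 1 ≤ y.val → ¬ ρ.r ⟨0, Nat.succ_pos n⟩ y
  · -- the block of 0 is a singleton
    have hsing' : ∀ x y : Fin (n+1), x.val = 0 → 1 ≤ y.val → ¬ ρ.r x y := by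
      intro x y hx hy
      have : x = ⟨0, Nat.succ_pos n⟩ := Fin.ext hx
      rw [this]; exact hsing y hy
    have hmono : StrictMono (fun i : Fin n => (⟨i.val+1, by have := i.isLt; omega⟩ : Fin (n+1))) := by
      intro u v huv
      show u.val + 1 < v.val + 1
      have : u.val < v.val := huv
      omega
    refine ⟨Sum.inl ⟨Setoid.comap _ ρ, comap_nc _ hmono hρ⟩, Subtype.ext ?_⟩
    show glueA _ = ρ
    apply Setoid.ext; intro x y
    have hx' := x.isLt; have hy' := y.isLt
    rcases Nat.eq_zero_or_pos x.val with hx | hx <;> rcases Nat.eq_zero_or_pos y.val with hy | hy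
    · have : x = y := Fin.ext (by omega)
      subst this
      exact iff_of_true (Setoid.refl' _ x) (Setoid.refl' ρ x)
    · exact iff_of_false (glueA_rel_zero _ x y hx hy) (hsing' x y hx hy)
    · exact iff_of_false (fun hr => glueA_rel_zero _ y x hy hx (Setoid.symm' _ hr))
        (fun hr => hsing' y x hy hx (Setoid.symm' ρ hr))
    · refine (glueA_rel_pos _ x y hx hy).trans ?_
      exact rel_congr' ρ x y (by show x.val-1+1 = x.val; omega) (by show y.val-1+1 = y.val; omega)
  · -- 0 has a partner; j is the least one
    push_neg at hsing
    obtain ⟨y0, hy01, hy0r⟩ := hsing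
    have hP : ∃ m : ℕ, ∃ hm : m < n + 1, 1 ≤ m ∧ ρ.r ⟨0, Nat.succ_pos n⟩ ⟨m, hm⟩ :=
      ⟨y0.val, y0.isLt, hy01, by simpa using hy0r⟩
    obtain ⟨j, ⟨hjlt, hj1, hjrel⟩, hjmin⟩ :
        ∃ j, (∃ hm : j < n + 1, 1 ≤ j ∧ ρ.r ⟨0, Nat.succ_pos n⟩ ⟨j, hm⟩) ∧
          ∀ m, m < j → ¬ (∃ hm : m < n + 1, 1 ≤ m ∧ ρ.r ⟨0, Nat.succ_pos n⟩ ⟨m, hm⟩) := by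
      classical
      exact ⟨Nat.find hP, Nat.find_spec hP, fun m hm => Nat.find_min hP hm⟩
    have hjn : j - 1 < n := by omega
    have F1 : ∀ y : Fin (n+1), 1 ≤ y.val → y.val ≤ j - 1 → ¬ ρ.r ⟨0, Nat.succ_pos n⟩ y := by
      intro y h1 h2 hr
      exact hjmin y.val (by omega) ⟨y.isLt, h1, by simpa using hr⟩
    have F1' : ∀ x y : Fin (n+1), x.val = 0 → 1 ≤ y.val → y.val ≤ j - 1 → ¬ ρ.r x y := by
      intro x y hx h1 h2
      have : x = ⟨0, Nat.succ_pos n⟩ := Fin.ext hx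
      rw [this]; exact F1 y h1 h2
    have F2 : ∀ x y : Fin (n+1), 1 ≤ x.val → x.val ≤ j - 1 → j ≤ y.val → ¬ ρ.r x y := by
      intro x y hx1 hx2 hy hr
      by_cases hyj : y.val = j
      · have hy' : y = ⟨j, hjlt⟩ := Fin.ext (by show y.val = j; omega)
        have : ρ.r ⟨0, Nat.succ_pos n⟩ x :=
          Setoid.trans' ρ (hy' ▸ hjrel : ρ.r _ y) (Setoid.symm' ρ hr)
        exact F1 x hx1 hx2 this
      · refine hρ ⟨⟨0, Nat.succ_pos n⟩, x, ⟨j, hjlt⟩, y, ?_, ?_, ?_, hjrel, hr,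
          fun hzx => F1 x hx1 hx2 hzx⟩
        · show (0:ℕ) < x.val; omega
        · show x.val < j; omega
        · show j < y.val; omega
    have F3 : ∀ y : Fin (n+1), (ρ.r ⟨j, hjlt⟩ y ↔ ρ.r ⟨0, Nat.succ_pos n⟩ y) :=
      fun y => ⟨fun h => Setoid.trans' ρ hjrel h, fun h => Setoid.trans' ρ (Setoid.symm' ρ hjrel) h⟩
    have hmono1 : StrictMono
        (fun i : Fin (j-1) => (⟨i.val+1, by have := i.isLt; omega⟩ : Fin (n+1))) := by
      intro u v huv
      show u.val + 1 < v.val + 1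
      have : u.val < v.val := huv
      omega
    have hmono2 : StrictMono (fun i : Fin (n-(j-1)) =>
        (⟨i.val+((j-1)+1), by have := i.isLt; omega⟩ : Fin (n+1))) := by
      intro u v huv
      show u.val + ((j-1)+1) < v.val + ((j-1)+1)
      have : u.val < v.val := huv
      omega
    refine ⟨Sum.inr ⟨⟨j-1, hjn⟩, ⟨Setoid.comap _ ρ, comap_nc _ hmono1 hρ⟩,
      ⟨Setoid.comap _ ρ, comap_nc _ hmono2 hρ⟩⟩, Subtype.ext ?_⟩
    show glueB _ _ _ = ρ
    apply Setoid.ext; intro x y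
    have hxlt := x.isLt; have hylt := y.isLt
    have trix : x.val = 0 ∨ (1 ≤ x.val ∧ x.val ≤ j - 1) ∨ j ≤ x.val := by omega
    have triy : y.val = 0 ∨ (1 ≤ y.val ∧ y.val ≤ j - 1) ∨ j ≤ y.val := by omega
    rcases trix with hx | hx | hx <;> rcases triy with hy | hy | hy
    · have : x = y := Fin.ext (by omega)
      subst this
      exact iff_of_true (Setoid.refl' _ x) (Setoid.refl' ρ x)
    · exact iff_of_false (glueB_not_rel_zero_lo _ _ _ x y hx
        (by show 1 ≤ y.val; omega) (by show y.val ≤ j-1; omega))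
        (F1' x y hx hy.1 hy.2)
    · refine (glueB_rel_zero_hi _ _ _ x y hx (by show (j-1)+1 ≤ y.val; omega)).trans ?_
      refine (rel_congr' ρ ⟨j, hjlt⟩ y (by show 0+((j-1)+1) = j; omega)
        (by show y.val-((j-1)+1)+((j-1)+1) = y.val; omega)).trans ?_
      exact (F3 y).trans (rel_congr' ρ x y (by show (0:ℕ) = x.val; omega) rfl)
    · exact iff_of_false
        (fun hr => glueB_not_rel_zero_lo _ _ _ y x hy
          (by show 1 ≤ x.val; omega) (by show x.val ≤ j-1; omega) (Setoid.symm' _ hr))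
        (fun hr => F1' y x hy hx.1 hx.2 (Setoid.symm' ρ hr))
    · refine (glueB_rel_lo_lo _ _ _ x y (by show 1 ≤ x.val; omega) (by show x.val ≤ j-1; omega)
        (by show 1 ≤ y.val; omega) (by show y.val ≤ j-1; omega)).trans ?_
      exact rel_congr' ρ x y (by show x.val-1+1 = x.val; omega) (by show y.val-1+1 = y.val; omega)
    · exact iff_of_false (glueB_not_rel_lo_hi _ _ _ x y (by show 1 ≤ x.val; omega)
        (by show x.val ≤ j-1; omega) (by show (j-1)+1 ≤ y.val; omega))
        (F2 x y hx.1 hx.2 hy)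
    · refine Iff.trans (rel_comm _ x y) ?_
      refine (glueB_rel_zero_hi _ _ _ y x hy (by show (j-1)+1 ≤ x.val; omega)).trans ?_
      refine (rel_congr' ρ ⟨j, hjlt⟩ x (by show 0+((j-1)+1) = j; omega)
        (by show x.val-((j-1)+1)+((j-1)+1) = x.val; omega)).trans ?_
      exact (F3 x).trans ((rel_congr' ρ y x (by show (0:ℕ) = y.val; omega) rfl).trans (rel_comm ρ y x))
    · exact iff_of_false
        (fun hr => glueB_not_rel_lo_hi _ _ _ y x (by show 1 ≤ y.val; omega)
          (by show y.val ≤ j-1; omega) (by show (j-1)+1 ≤ x.val; omega) (Setoid.symm' _ hr))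
        (fun hr => F2 y x hy.1 hy.2 hx (Setoid.symm' ρ hr))
    · refine (glueB_rel_hi_hi _ _ _ x y (by show (j-1)+1 ≤ x.val; omega)
        (by show (j-1)+1 ≤ y.val; omega)).trans ?_
      exact rel_congr' ρ x y (by show x.val-((j-1)+1)+((j-1)+1) = x.val; omega)
        (by show y.val-((j-1)+1)+((j-1)+1) = y.val; omega)

section sums

lemma sum_decomp (n : ℕ) (g : ℕ → ℕ) :
    ∑ π : NCS (n+1), g (nblocks π.1)
      = (∑ π : NCS n, g (nblocks π.1 + 1))
        + ∑ a : Fin n, (∑ p1 : NCS a.val, ∑ p2 : NCS (n - a.val),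
            g (nblocks p1.1 + nblocks p2.1)) := by
  classical
  rw [← Equiv.sum_comp (Equiv.ofBijective G ⟨G_inj, G_surj⟩)
    (fun π : NCS (n+1) => g (nblocks π.1))]
  rw [Fintype.sum_sum_type]
  congr 1
  · refine Finset.sum_congr rfl fun p _ => ?_
    show g (nblocks (glueA p.1)) = _
    rw [nblocks_glueA]
  · rw [← Finset.univ_sigma_univ, Finset.sum_sigma]
    refine Finset.sum_congr rfl fun a _ => ?_
    rw [Fintype.sum_prod_type]
    refine Finset.sum_congr rfl fun p1 _ => Finset.sum_congr rfl fun p2 _ => ?_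
    show g (nblocks (glueB a.isLt p1.1 p2.1)) = _
    rw [nblocks_glueB]

noncomputable def Nn (n : ℕ) : ℕ := Fintype.card (NCS n)
noncomputable def Sn (n : ℕ) : ℕ := ∑ π : NCS n, nblocks π.1

lemma Nn_succ (n : ℕ) : Nn (n+1) = Nn n + ∑ a : Fin n, Nn a.val * Nn (n - a.val) := by
  have h := sum_decomp n (fun _ => 1)
  simp only [Finset.sum_const, Finset.card_univ, smul_eq_mul, mul_one] at h
  simpa [Nn] using h

lemma Sn_succ (n : ℕ) :
    Sn (n+1) = Sn n + Nn n
      + ∑ a : Fin n, (Sn a.val * Nn (n - a.val) + Nn a.val * Sn (n - a.val)) := by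
  have h := sum_decomp n (fun m => m)
  have e1 : ∑ π : NCS n, (nblocks π.1 + 1) = Sn n + Nn n := by
    rw [Finset.sum_add_distrib]
    simp [Sn, Nn, Finset.card_univ]
  have e2 : ∀ a : Fin n, (∑ p1 : NCS a.val, ∑ p2 : NCS (n - a.val),
      (nblocks p1.1 + nblocks p2.1)) = Sn a.val * Nn (n - a.val) + Nn a.val * Sn (n - a.val) := by
    intro a
    have inner : ∀ p1 : NCS a.val, ∑ p2 : NCS (n - a.val), (nblocks p1.1 + nblocks p2.1)
        = Nn (n - a.val) * nblocks p1.1 + Sn (n - a.val) := by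
      intro p1
      rw [Finset.sum_add_distrib]
      simp [Sn, Nn, Finset.card_univ, mul_comm]
    rw [Finset.sum_congr rfl (fun p1 _ => inner p1), Finset.sum_add_distrib]
    simp only [Finset.sum_const, Finset.card_univ, smul_eq_mul, ← Finset.mul_sum]
    rw [show (∑ p1 : NCS a.val, nblocks p1.1) = Sn a.val from rfl]
    show Nn (n - a.val) * Sn a.val + Nn a.val * Sn (n - a.val) = _
    ring
  rw [show Sn (n+1) = ∑ π : NCS (n+1), nblocks π.1 from rfl, h, e1]
  rw [Finset.sum_congr rfl (fun a _ => e2 a)]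

end sums

lemma L1 (n : ℕ) : Nat.centralBinom (n+1) + 2 * catalan n = 4 * Nat.centralBinom n := by
  apply Nat.eq_of_mul_eq_mul_left (show 0 < n+1 by omega)
  calc (n+1) * (Nat.centralBinom (n+1) + 2 * catalan n)
      = (n+1) * Nat.centralBinom (n+1) + 2 * ((n+1) * catalan n) := by ring
    _ = 2 * (2*n+1) * Nat.centralBinom n + 2 * Nat.centralBinom n := by
        rw [Nat.succ_mul_centralBinom_succ, succ_mul_catalan_eq_centralBinom]
    _ = (n+1) * (4 * Nat.centralBinom n) := by ring

lemma L2 (n : ℕ) :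
    (∑ i ∈ Finset.range (n+1), catalan i * Nat.centralBinom (n - i)) + catalan n
      = 2 * Nat.centralBinom n := by
  induction n with
  | zero => simp [Nat.centralBinom]
  | succ n ih =>
    have hc : catalan (n+1) = ∑ i ∈ Finset.range (n+1), catalan i * catalan (n - i) := by
      rw [catalan_succ]
      exact Fin.sum_univ_eq_sum_range (fun i => catalan i * catalan (n - i)) (n+1)
    have HA : ∑ i ∈ Finset.range (n+1), (catalan i * Nat.centralBinom (n+1-i)
          + 2 * (catalan i * catalan (n-i)))
        = ∑ i ∈ Finset.range (n+1), 4 * (catalan i * Nat.centralBinom (n-i)) := by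
      refine Finset.sum_congr rfl fun i hi => ?_
      have hi' : i ≤ n := by simpa using Nat.lt_succ_iff.mp (Finset.mem_range.mp hi)
      have h1 : n + 1 - i = (n - i) + 1 := by omega
      rw [h1]
      have := L1 (n - i)
      calc catalan i * Nat.centralBinom (n-i+1) + 2 * (catalan i * catalan (n-i))
          = catalan i * (Nat.centralBinom ((n-i)+1) + 2 * catalan (n-i)) := by ring
        _ = catalan i * (4 * Nat.centralBinom (n-i)) := by rw [this]
        _ = 4 * (catalan i * Nat.centralBinom (n-i)) := by ring
    rw [Finset.sum_add_distrib, ← Finset.mul_sum, ← Finset.mul_sum, ← hc] at HA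
    have hsplit : ∑ i ∈ Finset.range (n+1+1), catalan i * Nat.centralBinom (n+1-i)
        = (∑ i ∈ Finset.range (n+1), catalan i * Nat.centralBinom (n+1-i)) + catalan (n+1) := by
      rw [Finset.sum_range_succ]
      simp [Nat.centralBinom]
    have l1 := L1 n
    omega

lemma Nn_zero : Nn 0 = 1 := by
  have he : ∀ π π' : Setoid (Fin 0), π = π' := fun π π' => Setoid.ext fun a b => a.elim0
  have hnc : IsNoncrossing (⊥ : Setoid (Fin 0)) := by rintro ⟨a, -⟩; exact a.elim0
  exact Fintype.card_eq_one_iff.mpr ⟨⟨⊥, hnc⟩, fun y => Subtype.ext (he y.1 ⊥)⟩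

lemma Sn_zero : Sn 0 = 0 := by
  refine Finset.sum_eq_zero fun π _ => ?_
  have : IsEmpty (Quotient π.1) := ⟨fun q => Quotient.inductionOn q fun a => a.elim0⟩
  exact Nat.card_of_isEmpty

lemma Nn_eq_catalan : ∀ n, Nn n = catalan n := by
  intro n
  induction n using Nat.strong_induction_on with
  | _ n ih =>
  cases n with
  | zero => simpa using Nn_zero
  | succ n =>
    rw [Nn_succ, catalan_succ]
    rw [Fin.sum_univ_castSucc (f := fun i : Fin (n+1) => catalan i * catalan (n - i))]
    have hterm : ∀ a : Fin n, Nn a.val * Nn (n - a.val) = catalan a.val * catalan (n - a.val) := by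
      intro a
      have := a.isLt
      rw [ih a.val (by omega), ih (n - a.val) (by omega)]
    rw [Finset.sum_congr rfl (fun a _ => hterm a), ih n (Nat.lt_succ_self n)]
    simp [Fin.coe_castSucc, Fin.val_last, Nat.sub_self]
    omega

lemma two_Sn : ∀ n : ℕ, 2 * Sn (n+1) = Nat.centralBinom (n+1) := by
  intro N
  induction N using Nat.strong_induction_on with
  | _ N ih =>
  cases N with
  | zero =>
    rw [Sn_succ, Sn_zero, Nn_zero]
    simp
    decide
  | succ n =>
    have h1 : 2 * Sn ((n+1) + 1) = 2 * Sn (n+1) + 2 * Nn (n+1)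
        + 2 * ∑ a ∈ Finset.range (n+1), (Sn a * Nn ((n+1) - a) + Nn a * Sn ((n+1) - a)) := by
      rw [Sn_succ (n+1),
        Fin.sum_univ_eq_sum_range (fun k => Sn k * Nn ((n+1) - k) + Nn k * Sn ((n+1) - k)) (n+1)]
      ring
    have h2 : 2 * Sn (n+1) = Nat.centralBinom (n+1) := ih n (by omega)
    have h3 : Nn (n+1) = catalan (n+1) := Nn_eq_catalan (n+1)
    have hdist : 2 * ∑ a ∈ Finset.range (n+1), (Sn a * Nn ((n+1) - a) + Nn a * Sn ((n+1) - a))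
        = (∑ a ∈ Finset.range (n+1), 2 * Sn a * catalan ((n+1) - a))
          + ∑ a ∈ Finset.range (n+1), catalan a * (2 * Sn ((n+1) - a)) := by
      rw [← Finset.sum_add_distrib, Finset.mul_sum]
      refine Finset.sum_congr rfl fun a _ => ?_
      rw [Nn_eq_catalan ((n+1) - a), Nn_eq_catalan a]
      ring
    -- the reflected form of the convolution
    have hrefl : ∑ i ∈ Finset.range ((n+1)+1), catalan i * Nat.centralBinom ((n+1) - i)
        = ∑ j ∈ Finset.range ((n+1)+1), catalan ((n+1) - j) * Nat.centralBinom j := by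
      rw [← Finset.sum_range_reflect (fun i => catalan i * Nat.centralBinom ((n+1) - i)) ((n+1)+1)]
      refine Finset.sum_congr rfl fun j hj => ?_
      have hj' : j ≤ n+1 := by have := Finset.mem_range.mp hj; omega
      have e1 : (n+1) + 1 - 1 - j = (n+1) - j := by omega
      have e2 : (n+1) - ((n+1) - j) = j := by omega
      rw [e1, e2]
    have hsplit1 : ∑ j ∈ Finset.range ((n+1)+1), catalan ((n+1) - j) * Nat.centralBinom j
        = (∑ j ∈ Finset.range (n+1), catalan ((n+1) - j) * Nat.centralBinom j)
          + Nat.centralBinom (n+1) := by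
      rw [Finset.sum_range_succ]
      simp
    have hX : (∑ a ∈ Finset.range (n+1), 2 * Sn a * catalan ((n+1) - a)) + catalan (n+1)
        = ∑ j ∈ Finset.range (n+1), catalan ((n+1) - j) * Nat.centralBinom j := by
      rw [Finset.sum_range_succ' (fun j => catalan ((n+1) - j) * Nat.centralBinom j) n,
        Finset.sum_range_succ' (fun a => 2 * Sn a * catalan ((n+1) - a)) n, Sn_zero]
      simp only [Nat.centralBinom_zero, mul_one, mul_zero, zero_mul, add_zero, Nat.sub_zero]
      congr 1
      refine Finset.sum_congr rfl fun i hi => ?_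
      have hi' : i < n := Finset.mem_range.mp hi
      rw [ih i (by omega)]
      ring
    have hY : ∑ a ∈ Finset.range (n+1), catalan a * (2 * Sn ((n+1) - a))
        = ∑ a ∈ Finset.range (n+1), catalan a * Nat.centralBinom ((n+1) - a) := by
      refine Finset.sum_congr rfl fun a ha => ?_
      have ha' : a < n+1 := Finset.mem_range.mp ha
      have e : (n+1) - a = ((n+1) - a - 1) + 1 := by omega
      rw [e, ih ((n+1) - a - 1) (by omega)]
    have hsplit2 : ∑ i ∈ Finset.range ((n+1)+1), catalan i * Nat.centralBinom ((n+1) - i)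
        = (∑ a ∈ Finset.range (n+1), catalan a * Nat.centralBinom ((n+1) - a)) + catalan (n+1) := by
      rw [Finset.sum_range_succ]
      simp [Nat.centralBinom_zero]
    have hL2 := L2 (n+1)
    have hL1 := L1 (n+1)
    omega

/-- The total number of blocks over all noncrossing partitions of `{1,…,k}` is
`(1/2)·binom(2k,k)`. -/
theorem nc_total_blocks_eq_half_centralBinom (k : ℕ) (hk : 1 ≤ k) :
    2 * ∑ π : {π : Setoid (Fin k) // IsNoncrossing π}, nblocks π.1 =
      Nat.centralBinom k := by
  cases k with
  | zero => omega
  | succ m => exact two_Sn m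
end

section
/- For the hypercube-type exponents, Σ_{l=1}^{⌈k/2⌉} d_{k,2l−1} = (1/(k+1))·binom(2k,k), where d_{kr} = f_{kr} − f_{k,r+1} and f_{kr} = binom(2k,k−r) − binom(2k,k−r−1). -/
/-- `Σ_{l=1}^{⌈k/2⌉} d_{k,2l-1} = (1/(k+1))·binom(2k,k) = catalan k`, where
`d_{kr} = f_{kr} - f_{k,r+1}` and `f_{kr} = binom(2k,k-r) - binom(2k,k-r-1)` (binomials
with negative lower index vanish; `f` is written in the equivalent symmetric form
`binom(2k,k+r) - binom(2k,k+r+1)`). -/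
theorem sum_odd_d_eq_catalan (k : ℕ) (hk : 1 ≤ k) :
    (∑ l ∈ Finset.Icc 1 ((k + 1) / 2),
      ((((2 * k).choose (k + (2 * l - 1)) : ℤ) - (2 * k).choose (k + (2 * l - 1) + 1)) -
       (((2 * k).choose (k + 2 * l) : ℤ) - (2 * k).choose (k + 2 * l + 1)))) =
      catalan k := by
  obtain ⟨n, hn⟩ : ∃ n, 2 * k = n + 1 := ⟨2 * k - 1, by omega⟩
  set m := (k + 1) / 2 with hm
  set F : ℕ → ℤ := fun i => (n.choose (k + 2 * i) : ℤ) - n.choose (k + 2 * i + 1) with hF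
  have hterm : ∀ l ∈ Finset.Icc 1 m,
      ((((2 * k).choose (k + (2 * l - 1)) : ℤ) - (2 * k).choose (k + (2 * l - 1) + 1)) -
       (((2 * k).choose (k + 2 * l) : ℤ) - (2 * k).choose (k + 2 * l + 1)))
        = F (l - 1) - F l := by
    intro l hl
    simp only [Finset.mem_Icc] at hl
    obtain ⟨i, rfl⟩ : ∃ i, l = i + 1 := ⟨l - 1, by omega⟩
    have c1 : (2 * k).choose (k + (2 * (i + 1) - 1)) = n.choose (k + 2 * i) + n.choose (k + 2 * i + 1) := by
      have h : k + (2 * (i + 1) - 1) = (k + 2 * i) + 1 := by omega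
      rw [h, hn, Nat.choose_succ_succ]
    have c2 : (2 * k).choose (k + (2 * (i + 1) - 1) + 1) = n.choose (k + 2 * i + 1) + n.choose (k + 2 * i + 2) := by
      have h : k + (2 * (i + 1) - 1) + 1 = (k + 2 * i + 1) + 1 := by omega
      rw [h, hn, Nat.choose_succ_succ]
    have c3 : (2 * k).choose (k + 2 * (i + 1)) = n.choose (k + 2 * i + 1) + n.choose (k + 2 * i + 2) := by
      have h : k + 2 * (i + 1) = (k + 2 * i + 1) + 1 := by omega
      rw [h, hn, Nat.choose_succ_succ]
    have c4 : (2 * k).choose (k + 2 * (i + 1) + 1) = n.choose (k + 2 * i + 2) + n.choose (k + 2 * i + 3) := by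
      have h : k + 2 * (i + 1) + 1 = (k + 2 * i + 2) + 1 := by omega
      rw [h, hn, Nat.choose_succ_succ]
    have c5 : k + 2 * (i + 1) = k + 2 * i + 2 := by omega
    have c6 : k + 2 * (i + 1) + 1 = k + 2 * i + 3 := by omega
    have e5 : i + 1 - 1 = i := rfl
    rw [c1, c2, c3, c4]
    simp only [hF, e5, c5, c6]
    push_cast
    ring
  rw [Finset.sum_congr rfl hterm]
  -- telescope
  have hre : ∀ M : ℕ, (∑ l ∈ Finset.Icc 1 M, (F (l - 1) - F l)) = F 0 - F M := by
    intro M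
    induction M with
    | zero => simp
    | succ M ih =>
      rw [Finset.sum_Icc_succ_top (by omega), ih]
      simp
  rw [hre m]
  have hFm : F m = 0 := by
    have h1 : n < k + 2 * m := by omega
    have h2 : n < k + 2 * m + 1 := by omega
    simp [hF, Nat.choose_eq_zero_of_lt h1, Nat.choose_eq_zero_of_lt h2]
  rw [hFm, sub_zero, hF]
  -- Now: C(n,k) - C(n,k+1) = catalan k
  simp only [mul_zero, add_zero]
  have hkey : n.choose (k + 1) * (k + 1) = n.choose k * (k - 1) := by
    rw [Nat.choose_succ_right_eq]
    congr 1
    omega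
  have hcb : ((2 * k).choose k : ℤ) = (k + 1) * catalan k := by
    have := succ_mul_catalan_eq_centralBinom k
    rw [Nat.centralBinom_eq_two_mul_choose] at this
    exact_mod_cast this.symm
  have hdouble : (2 * k).choose k = 2 * n.choose k := by
    obtain ⟨j, rfl⟩ : ∃ j, k = j + 1 := ⟨k - 1, by omega⟩
    rw [hn, Nat.choose_succ_succ]
    have hsym : n.choose j = n.choose (j + 1) := by
      have h : j = n - (j + 1) := by omega
      nth_rewrite 1 [h]
      rw [Nat.choose_symm (by omega)]
    simp only [Nat.succ_eq_add_one] at *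
    omega
  have hne : ((k : ℤ) + 1) ≠ 0 := by positivity
  apply mul_left_cancel₀ hne
  have hkeyZ : ((k : ℤ) + 1) * (n.choose (k + 1) : ℤ) = ((k : ℤ) - 1) * n.choose k := by
    have : ((n.choose (k + 1) * (k + 1) : ℕ) : ℤ) = ((n.choose k * (k - 1) : ℕ) : ℤ) :=
      congrArg (Nat.cast (R := ℤ)) hkey
    push_cast at this
    rw [Nat.cast_sub hk] at this
    push_cast at this
    linarith
  have hdZ : (2 : ℤ) * n.choose k = (k + 1) * catalan k := by
    rw [← hcb]
    exact_mod_cast congrArg (Nat.cast (R := ℤ)) hdouble |>.symm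
  linarith [hkeyZ, hdZ]
end

section
/- Let f'_{lr} = binom(3l, l−r) − binom(3l, l−r−1) and d'_{lr} = f'_{lr} − f'_{l,r+1}. Then Σ_{s=2}^{l} ⌊s/2⌋ · d'_{ls} = binom(3l−1, l−2) for all l ≥ 1. -/
/-- `Σ_{s=2}^{l} ⌊s/2⌋·d'_{ls} = binom(3l-1, l-2)`, where `d'_{lr} = f'_{lr} - f'_{l,r+1}`
and `f'_{lr} = binom(3l,l-r) - binom(3l,l-r-1)` (binomials with negative lower index
vanish; both `f'` and the right-hand side are written in the equivalent symmetric forms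
`binom(3l,2l+r) - binom(3l,2l+r+1)` and `binom(3l-1,2l+1)`). -/
theorem sum_floor_half_d_eq_binom (l : ℕ) (hl : 1 ≤ l) :
    (∑ s ∈ Finset.Icc 2 l, ((s / 2 : ℕ) : ℤ) *
      ((((3 * l).choose (2 * l + s) : ℤ) - (3 * l).choose (2 * l + s + 1)) -
       (((3 * l).choose (2 * l + s + 1) : ℤ) - (3 * l).choose (2 * l + s + 2)))) =
      (3 * l - 1).choose (2 * l + 1) := by
  obtain ⟨m, hm⟩ : ∃ m, 3 * l = m + 1 := ⟨3 * l - 1, by omega⟩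
  have hm' : 3 * l - 1 = m := by omega
  set G : ℕ → ℤ := fun s =>
    ((s / 2 : ℕ) : ℤ) * (((3 * l).choose (2 * l + s) : ℤ) - (3 * l).choose (2 * l + s + 1))
      + (m.choose (2 * l + 2 * (s / 2) + 1) : ℤ) with hG
  have key : ∀ s, ((s / 2 : ℕ) : ℤ) *
      ((((3 * l).choose (2 * l + s) : ℤ) - (3 * l).choose (2 * l + s + 1)) -
       (((3 * l).choose (2 * l + s + 1) : ℤ) - (3 * l).choose (2 * l + s + 2)))
      = G s - G (s + 1) := by
    intro s
    rcases Nat.even_or_odd s with ⟨k, hk⟩ | ⟨k, hk⟩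
    · subst hk
      have h1 : (k + k) / 2 = k := by omega
      have h2 : (k + k + 1) / 2 = k := by omega
      have e1 : 2 * l + (k + k + 1) = 2 * l + (k + k) + 1 := by omega
      have e2 : 2 * l + (k + k + 1) + 1 = 2 * l + (k + k) + 2 := by omega
      simp only [hG, h1, h2, e1, e2]
      ring
    · subst hk
      have h1 : (2 * k + 1) / 2 = k := by omega
      have h2 : (2 * k + 1 + 1) / 2 = k + 1 := by omega
      have e0 : 2 * l + (2 * k + 1) = 2 * l + 2 * k + 1 := by omega
      have e1 : 2 * l + (2 * k + 1) + 1 = 2 * l + 2 * k + 2 := by omega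
      have e2 : 2 * l + (2 * k + 1) + 2 = 2 * l + 2 * k + 3 := by omega
      have e3 : 2 * l + (2 * k + 1 + 1) = 2 * l + 2 * k + 2 := by omega
      have e4 : 2 * l + (2 * k + 1 + 1) + 1 = 2 * l + 2 * k + 3 := by omega
      have e5 : 2 * l + 2 * (k + 1) + 1 = 2 * l + 2 * k + 3 := by omega
      have p1 : (3 * l).choose (2 * l + 2 * k + 2)
          = m.choose (2 * l + 2 * k + 1) + m.choose (2 * l + 2 * k + 2) := by
        rw [hm]; exact Nat.choose_succ_succ' m (2 * l + 2 * k + 1)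
      have p2 : (3 * l).choose (2 * l + 2 * k + 3)
          = m.choose (2 * l + 2 * k + 2) + m.choose (2 * l + 2 * k + 3) := by
        rw [hm]; exact Nat.choose_succ_succ' m (2 * l + 2 * k + 2)
      simp only [hG, h1, h2, e0, e1, e2, e3, e4, e5, p1, p2]
      push_cast
      ring
  rw [Finset.sum_congr rfl fun s _ => key s]
  have tel : ∀ b : ℕ, 1 ≤ b →
      ∑ s ∈ Finset.Icc 2 b, (G s - G (s + 1)) = G 2 - G (b + 1) := by
    intro b hb
    induction b with
    | zero => omega
    | succ n ih =>
      rcases Nat.lt_or_ge n 1 with h | h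
      · interval_cases n
        simp
      · rw [Finset.sum_Icc_succ_top (by omega), ih h]
        ring
  rw [tel l hl]
  have z1 : (3 * l).choose (2 * l + (l + 1)) = 0 :=
    Nat.choose_eq_zero_of_lt (by omega)
  have z2 : (3 * l).choose (2 * l + (l + 1) + 1) = 0 :=
    Nat.choose_eq_zero_of_lt (by omega)
  have z3 : m.choose (2 * l + 2 * ((l + 1) / 2) + 1) = 0 :=
    Nat.choose_eq_zero_of_lt (by omega)
  have p1 : (3 * l).choose (2 * l + 2) = m.choose (2 * l + 1) + m.choose (2 * l + 2) := by
    rw [hm]; exact Nat.choose_succ_succ' m (2 * l + 1)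
  have p2 : (3 * l).choose (2 * l + 2 + 1) = m.choose (2 * l + 2) + m.choose (2 * l + 3) := by
    rw [hm]; exact Nat.choose_succ_succ' m (2 * l + 2)
  have h22 : (2 : ℕ) / 2 = 1 := rfl
  have e6 : 2 * l + 2 * 1 + 1 = 2 * l + 3 := by omega
  simp only [hG, h22, e6, hm', z1, z2, z3, p1, p2]
  push_cast
  ring
end

section
/- For partitions of {1,...,2l} into blocks of even size (the hyperoctahedral case), the number of partitions with exactly r blocks, summed with weight t^r, gives the generating polynomial T_{2l}(t) = Σ_{r=1}^{l} (1/r)·binom(l−1, r−1)·binom(2l, r−1)·t^r in the noncrossing (free) case: the number of noncrossing partitions of {1,...,2l} with all blocks of even size and exactly r blocks equals (1/r)·binom(l−1,r−1)·binom(2l,r−1). -/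
open Finset Polynomial

namespace NC
open scoped Classical

variable {n : ℕ}

/-- extend `v : Fin n → ℕ` to `ℕ` by zero -/
def exd (v : Fin n → ℕ) (i : ℕ) : ℕ := if h : i < n then v ⟨i, h⟩ else 0

/-- prefix sums -/
def S (v : Fin n → ℕ) (k : ℕ) : ℕ := ∑ i ∈ Finset.range k, exd v i

lemma S_succ (v : Fin n → ℕ) (k : ℕ) : S v (k+1) = S v k + exd v k :=
  Finset.sum_range_succ _ _

lemma exd_val (v : Fin n → ℕ) (i : Fin n) : exd v i.val = v i := by
  simp [exd, i.isLt]

lemma S_top (v : Fin n → ℕ) : S v n = ∑ i, v i := by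
  rw [S, ← Fin.sum_univ_eq_sum_range]
  exact Finset.sum_congr rfl fun i _ => exd_val v i

variable (π : Setoid (Fin n))

noncomputable def blk (i : Fin n) : Finset (Fin n) := univ.filter fun j => π.r i j

lemma mem_blk {i j : Fin n} : j ∈ blk π i ↔ π.r i j := by simp [blk]

lemma self_mem_blk (i : Fin n) : i ∈ blk π i := (mem_blk π).2 (π.iseqv.refl i)

noncomputable def strt (i : Fin n) : Fin n := (blk π i).min' ⟨i, self_mem_blk π i⟩

lemma r_strt (i : Fin n) : π.r i (strt π i) := (mem_blk π).1 (Finset.min'_mem _ _)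

lemma strt_le {i j : Fin n} (h : π.r i j) : strt π i ≤ j :=
  Finset.min'_le _ _ ((mem_blk π).2 h)

lemma strt_le_self (i : Fin n) : strt π i ≤ i := strt_le π (π.iseqv.refl i)

lemma blk_congr {i j : Fin n} (h : π.r i j) : blk π i = blk π j := by
  ext x
  simp only [mem_blk]
  exact ⟨fun hx => π.iseqv.trans (π.iseqv.symm h) hx, fun hx => π.iseqv.trans h hx⟩

lemma strt_congr {i j : Fin n} (h : π.r i j) : strt π i = strt π j := by
  unfold strt
  congr 1
  exact blk_congr π h

lemma strt_strt (i : Fin n) : strt π (strt π i) = strt π i :=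
  (strt_congr π (r_strt π i)).symm

lemma r_iff_strt {i j : Fin n} : π.r i j ↔ strt π i = strt π j := by
  constructor
  · exact strt_congr π
  · intro h
    exact π.iseqv.trans (r_strt π i) (h ▸ π.iseqv.symm (r_strt π j))

noncomputable def wrd : Fin n → ℕ := fun i => if strt π i = i then (blk π i).card else 0

lemma card_filter_val_lt (k : ℕ) (hk : k ≤ n) :
    (univ.filter fun x : Fin n => x.val < k).card = k := by
  have : (univ.filter fun x : Fin n => x.val < k)
      = (Finset.range k).attachFin (fun m hm => lt_of_lt_of_le (Finset.mem_range.1 hm) hk) := by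
    ext x
    simp [Finset.mem_attachFin]
  rw [this, Finset.card_attachFin, Finset.card_range]

lemma S_wrd (k : ℕ) : S (wrd π) k = (univ.filter fun x => (strt π x).val < k).card := by
  induction k with
  | zero => simp [S]
  | succ k ih =>
    rw [S_succ, ih]
    by_cases hk : k < n
    · have hsplit : (univ.filter fun x => (strt π x).val < k + 1)
          = (univ.filter fun x => (strt π x).val < k)
            ∪ (univ.filter fun x => strt π x = ⟨k, hk⟩) := by
        ext x
        simp only [mem_filter, mem_univ, true_and, Finset.mem_union, Nat.lt_succ_iff_lt_or_eq]
        constructor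
        · rintro (h | h)
          · exact Or.inl h
          · exact Or.inr (Fin.ext h)
        · rintro (h | h)
          · exact Or.inl h
          · exact Or.inr (by rw [h])
      rw [hsplit, Finset.card_union_of_disjoint]
      · congr 1
        rw [exd, dif_pos hk]
        by_cases ho : strt π ⟨k, hk⟩ = ⟨k, hk⟩
        · rw [wrd, if_pos ho]
          congr 1
          ext x
          simp only [mem_blk, mem_filter, mem_univ, true_and]
          constructor
          · intro hx
            rw [← strt_congr π hx, ho]
          · intro hx
            exact π.iseqv.symm (r_iff_strt π |>.2 (by rw [hx, ho]))
        · rw [wrd, if_neg ho]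
          symm
          rw [Finset.card_eq_zero, Finset.filter_eq_empty_iff]
          intro x _ hx
          exact ho (by rw [← hx, strt_strt])
      · rw [Finset.disjoint_filter]
        intro x _ h1 h2
        rw [h2] at h1
        exact lt_irrefl k h1
    · push_neg at hk
      rw [exd, dif_neg (by omega)]
      have h1 : (univ.filter fun x : Fin n => (strt π x).val < k) = univ :=
        Finset.filter_true_of_mem fun x _ => lt_of_lt_of_le (strt π x).isLt hk
      have h2 : (univ.filter fun x : Fin n => (strt π x).val < k + 1) = univ :=
        Finset.filter_true_of_mem fun x _ => lt_of_lt_of_le (strt π x).isLt (by omega)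
      rw [h1, h2, add_zero]

lemma S_wrd_ge (k : ℕ) (hk : k ≤ n) : k ≤ S (wrd π) k := by
  rw [S_wrd]
  calc k = (univ.filter fun x : Fin n => x.val < k).card := (card_filter_val_lt k hk).symm
    _ ≤ _ := Finset.card_le_card (by
        intro x hx
        simp only [mem_filter, mem_univ, true_and] at *
        exact lt_of_le_of_lt (Fin.le_def.1 (strt_le_self π x)) hx)

lemma sum_wrd : ∑ i, wrd π i = n := by
  rw [← S_top, S_wrd]
  rw [Finset.filter_true_of_mem fun x _ => (strt π x).isLt]
  simp

lemma wrd_ne_zero_iff (i : Fin n) : wrd π i ≠ 0 ↔ strt π i = i := by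
  unfold wrd
  by_cases h : strt π i = i
  · simp only [h, if_pos]
    have : i ∈ blk π i := self_mem_blk π i
    simp only [iff_true]
    exact Finset.card_ne_zero_of_mem this
  · simp [h]

lemma blk_card_eq (i : Fin n) : (blk π i).card = Nat.card {j // π.r i j} := by
  rw [Nat.card_eq_fintype_card, Fintype.card_subtype]
  congr 1

lemma count_openers : (univ.filter fun i => wrd π i ≠ 0).card = nblocks π := by
  have h1 : (univ.filter fun i => wrd π i ≠ 0) = (univ.filter fun i => strt π i = i) := by
    ext i
    simp [wrd_ne_zero_iff]
  have h2 : Nat.card {i : Fin n // strt π i = i} = Nat.card (Quotient π) := by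
    apply Nat.card_eq_of_bijective (fun i => Quotient.mk π i.val)
    constructor
    · rintro ⟨a, ha⟩ ⟨b, hb⟩ h
      have hr : π.r a b := Quotient.exact h
      have h3 := strt_congr π hr
      rw [ha, hb] at h3
      exact Subtype.ext h3
    · intro q
      obtain ⟨x, rfl⟩ := Quotient.exists_rep q
      exact ⟨⟨strt π x, strt_strt π x⟩, Quotient.sound (π.iseqv.symm (r_strt π x))⟩
  rw [h1, nblocks, ← h2, Nat.card_eq_fintype_card, Fintype.card_subtype]

end NC

namespace NC
open Finset
open scoped Classical

variable {n : ℕ}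

/-- `i` is a candidate opener position for a closer at `j` -/
def cnd (v : Fin n → ℕ) (j i : ℕ) : Prop := S v i + (j + 1) ≤ S v (j + 1) + i

noncomputable def oo (v : Fin n → ℕ) (j : Fin n) : ℕ :=
  if v j ≠ 0 then j.val else Nat.findGreatest (cnd v j.val) j.val

lemma oo_le (v : Fin n → ℕ) (j : Fin n) : oo v j ≤ j.val := by
  unfold oo
  split
  · exact le_rfl
  · exact Nat.findGreatest_le _

noncomputable def om (v : Fin n → ℕ) (j : Fin n) : Fin n :=
  ⟨oo v j, lt_of_le_of_lt (oo_le v j) j.isLt⟩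

noncomputable def ptn (v : Fin n → ℕ) : Setoid (Fin n) := Setoid.ker (om v)

lemma ptn_r (v : Fin n → ℕ) {a b : Fin n} : (ptn v).r a b ↔ om v a = om v b := Iff.rfl

section GoodFacts

variable {v : Fin n → ℕ} (hg : ∀ k, k ≤ n → k ≤ S v k)
include hg

lemma cond_zero (j : Fin n) : cnd v j.val 0 := by
  have := hg (j.val + 1) j.isLt
  simp only [cnd, S, Finset.range_zero, Finset.sum_empty, zero_add, add_zero]
  exact this

lemma oo_closer {j : Fin n} (hj : v j = 0) :
    oo v j = Nat.findGreatest (cnd v j.val) j.val := by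
  simp [oo, hj]

lemma cond_oo {j : Fin n} (hj : v j = 0) : cnd v j.val (oo v j) := by
  rw [oo_closer hg hj]
  exact Nat.findGreatest_spec (Nat.zero_le _) (cond_zero hg j)

lemma not_cond_between {j : Fin n} (hj : v j = 0) {i : ℕ} (h1 : oo v j < i)
    (h2 : i ≤ j.val) : ¬ cnd v j.val i := by
  rw [oo_closer hg hj] at h1
  exact Nat.findGreatest_is_greatest h1 h2

lemma oo_lt_closer {j : Fin n} (hj : v j = 0) : oo v j < j.val := by
  rcases lt_or_eq_of_le (oo_le v j) with h | h
  · exact h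
  · exfalso
    have hc := cond_oo hg hj
    rw [h] at hc
    have hS : S v (j.val + 1) = S v j.val := by
      rw [S_succ]
      have : exd v j.val = v j := exd_val v j
      rw [this, hj, add_zero]
    rw [cnd, hS] at hc
    omega

lemma two_le_v_om {j : Fin n} (hj : v j = 0) : 2 ≤ v (om v j) := by
  have hplt : oo v j < j.val := oo_lt_closer hg hj
  have h1 := cond_oo hg hj
  have h2 := not_cond_between hg hj (show oo v j < oo v j + 1 by omega) (by omega)
  rw [cnd] at h1 h2
  rw [S_succ] at h2
  have h3 : exd v (oo v j) = v (om v j) := exd_val v (om v j)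
  rw [h3] at h2
  omega

lemma v_om_ne (j : Fin n) : v (om v j) ≠ 0 := by
  by_cases hj : v j = 0
  · have := two_le_v_om hg hj
    omega
  · have : om v j = j := Fin.ext (by simp [om, oo, hj])
    rw [this]
    exact hj

end GoodFacts

lemma om_opener {v : Fin n → ℕ} {j : Fin n} (h : v j ≠ 0) : om v j = j :=
  Fin.ext (by simp [om, oo, h])

lemma om_om {v : Fin n → ℕ} (hg : ∀ k, k ≤ n → k ≤ S v k) (j : Fin n) :
    om v (om v j) = om v j := om_opener (v_om_ne hg j)

lemma om_le_self {v : Fin n → ℕ} (j : Fin n) : om v j ≤ j := oo_le v j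

section Fibers

variable {v : Fin n → ℕ} (hg : ∀ k, k ≤ n → k ≤ S v k)
include hg

lemma fiber_card_le (p : Fin n) (hp : v p ≠ 0) :
    (univ.filter fun j => om v j = p).card ≤ v p := by
  classical
  have hsub : (univ.filter fun j => om v j = p) ⊆
      insert p (univ.filter fun j => om v j = p ∧ v j = 0) := by
    intro x hx
    simp only [mem_filter, mem_univ, true_and] at hx
    by_cases hvx : v x = 0
    · exact Finset.mem_insert_of_mem (by simp [hx, hvx])
    · have hxp : x = p := (om_opener hvx).symm.trans hx
      exact Finset.mem_insert.2 (Or.inl hxp)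
  have hcard2 : (univ.filter fun j => om v j = p ∧ v j = 0).card ≤ v p - 1 := by
    have : ∀ x ∈ (univ.filter fun j => om v j = p ∧ v j = 0),
        (S v (x.val + 1) + p.val) - (S v p.val + x.val + 1) ∈ Finset.range (v p - 1) := by
      intro x hx
      simp only [mem_filter, mem_univ, true_and] at hx
      obtain ⟨hom, hvx⟩ := hx
      have hpval : oo v x = p.val := congrArg Fin.val hom
      have h1 := cond_oo hg hvx
      rw [hpval] at h1
      have hplt : p.val < x.val := by
        have := oo_lt_closer hg hvx
        omega
      have h2 := not_cond_between hg hvx (by omega : oo v x < p.val + 1) (by omega)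
      rw [cnd] at h1 h2
      rw [S_succ] at h2
      have h3 : exd v (p.val) = v p := exd_val v p
      rw [h3] at h2
      have hv2 : 2 ≤ v p := by
        have := two_le_v_om hg hvx
        rw [hom] at this
        exact this
      simp only [Finset.mem_range]
      omega
    have hinj : ∀ x ∈ (univ.filter fun j => om v j = p ∧ v j = 0),
        ∀ y ∈ (univ.filter fun j => om v j = p ∧ v j = 0),
        (S v (x.val + 1) + p.val) - (S v p.val + x.val + 1) =
          (S v (y.val + 1) + p.val) - (S v p.val + y.val + 1) → x = y := by
      intro x hx y hy heq
      simp only [mem_filter, mem_univ, true_and] at hx hy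
      obtain ⟨homx, hvx⟩ := hx
      obtain ⟨homy, hvy⟩ := hy
      by_contra hne
      -- wlog x < y
      rcases lt_trichotomy x.val y.val with hlt | heqv | hlt
      · have hpx : oo v x = p.val := congrArg Fin.val homx
        have hpy : oo v y = p.val := congrArg Fin.val homy
        have c1 := cond_oo hg hvx
        have c2 := cond_oo hg hvy
        rw [hpx] at c1
        rw [hpy] at c2
        have hplt : p.val < x.val := by have := oo_lt_closer hg hvx; omega
        have nc := not_cond_between hg hvy (by omega : oo v y < x.val + 1) (by omega)
        rw [cnd] at c1 c2 nc
        omega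
      · exact hne (Fin.ext heqv)
      · have hpx : oo v x = p.val := congrArg Fin.val homx
        have hpy : oo v y = p.val := congrArg Fin.val homy
        have c1 := cond_oo hg hvx
        have c2 := cond_oo hg hvy
        rw [hpx] at c1
        rw [hpy] at c2
        have hplt : p.val < y.val := by have := oo_lt_closer hg hvy; omega
        have nc := not_cond_between hg hvx (by omega : oo v x < y.val + 1) (by omega)
        rw [cnd] at c1 c2 nc
        omega
    have := Finset.card_le_card_of_injOn _ this (fun x hx y hy => hinj x hx y hy)
    simpa using this
  calc (univ.filter fun j => om v j = p).card
      ≤ (insert p (univ.filter fun j => om v j = p ∧ v j = 0)).card := Finset.card_le_card hsub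
    _ ≤ (univ.filter fun j => om v j = p ∧ v j = 0).card + 1 := Finset.card_insert_le _ _
    _ ≤ (v p - 1) + 1 := by omega
    _ = v p := by
        have : v p ≠ 0 := hp
        omega

lemma fiber_card_eq (hs : ∑ i, v i = n) (p : Fin n) (hp : v p ≠ 0) :
    (univ.filter fun j => om v j = p).card = v p := by
  classical
  have hfib : (univ : Finset (Fin n)).card =
      ∑ q ∈ univ.filter (fun q => v q ≠ 0), (univ.filter fun j => om v j = q).card :=
    Finset.card_eq_sum_card_fiberwise (fun x _ => by
      simp only [Finset.mem_coe, mem_filter, mem_univ, true_and]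
      exact v_om_ne hg x)
  have hsum : ∑ q ∈ univ.filter (fun q => v q ≠ 0), v q = n := by
    exact (Finset.sum_filter_ne_zero univ).trans hs
  have hle : ∀ q ∈ univ.filter (fun q => v q ≠ 0),
      (univ.filter fun j => om v j = q).card ≤ v q := by
    intro q hq
    simp only [mem_filter, mem_univ, true_and] at hq
    exact fiber_card_le hg q hq
  have htot : ∑ q ∈ univ.filter (fun q => v q ≠ 0), (univ.filter fun j => om v j = q).card
      = ∑ q ∈ univ.filter (fun q => v q ≠ 0), v q := by
    rw [← hfib, hsum]
    simp
  have := (Finset.sum_eq_sum_iff_of_le hle).1 htot p (by simp [hp])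
  exact this.symm ▸ rfl

end Fibers
end NC

namespace NC
open Finset
open scoped Classical

variable {n : ℕ} {v : Fin n → ℕ}

lemma S_succ_closer (v : Fin n → ℕ) {c : Fin n} (h : v c = 0) :
    S v (c.val + 1) = S v c.val := by
  rw [S_succ, exd_val v c, h, add_zero]

lemma ptn_noncrossing (hg : ∀ k, k ≤ n → k ≤ S v k) : IsNoncrossing (ptn v) := by
  rintro ⟨a, b, c, d, hab, hbc, hcd, hac, hbd, hnab⟩
  rw [ptn_r] at hac hbd hnab
  have hab' : a.val < b.val := hab
  have hbc' : b.val < c.val := hbc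
  have hcd' : c.val < d.val := hcd
  have hvc : v c = 0 := by
    by_contra hvc
    have h1 : om v c = c := om_opener hvc
    have h2 : (om v a).val ≤ a.val := om_le_self a
    rw [hac, h1] at h2
    omega
  have hvd : v d = 0 := by
    by_contra hvd
    have h1 : om v d = d := om_opener hvd
    have h2 : (om v b).val ≤ b.val := om_le_self b
    rw [hbd, h1] at h2
    omega
  have hPa : oo v c ≤ a.val := by
    have h2 : (om v a).val ≤ a.val := om_le_self a
    rw [hac] at h2
    exact h2
  have hQb : oo v d ≤ b.val := by
    have h2 : (om v b).val ≤ b.val := om_le_self b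
    rw [hbd] at h2
    exact h2
  have hne : oo v c ≠ oo v d := by
    intro h
    exact hnab (by rw [hac, hbd]; exact Fin.ext h)
  have f1 := cond_oo hg hvc
  have f3 := cond_oo hg hvd
  have SC := S_succ_closer v hvc
  have SD := S_succ_closer v hvd
  rcases lt_trichotomy (oo v c) (oo v d) with hlt | heq | hlt
  · have nc1 := not_cond_between hg hvc hlt (by omega)
    have nc2 := not_cond_between hg hvd (show oo v d < c.val by omega) (by omega)
    rw [cnd] at f3 nc1 nc2
    omega
  · exact hne heq
  · by_cases hvb : v b = 0
    · have hQB : oo v b = oo v d := congrArg Fin.val hbd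
      have fb1 := cond_oo hg hvb
      have fb2 := not_cond_between hg hvb (show oo v b < oo v c by omega)
        (by omega)
      have nc3 := not_cond_between hg hvc (show oo v c < b.val by omega) (by omega)
      have SB := S_succ_closer v hvb
      rw [cnd] at f1 fb2 nc3
      omega
    · have h1 : om v b = b := om_opener hvb
      have hQB : oo v b = oo v d := congrArg Fin.val hbd
      have : (om v b).val = b.val := congrArg Fin.val h1
      have : oo v b = b.val := this
      omega

lemma ptn_blockcard (hg : ∀ k, k ≤ n → k ≤ S v k) (hs : ∑ i, v i = n) (i : Fin n) :
    Nat.card {j // (ptn v).r i j} = v (om v i) := by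
  rw [Nat.card_eq_fintype_card, Fintype.card_subtype]
  have he : (univ.filter fun j => (ptn v).r i j) = (univ.filter fun j => om v j = om v i) := by
    ext x
    simp only [mem_filter, mem_univ, true_and]
    exact ⟨fun h => ((ptn_r v).1 h).symm, fun h => (ptn_r v).2 h.symm⟩
  rw [he, fiber_card_eq hg hs (om v i) (v_om_ne hg i)]

lemma ptn_nblocks (hg : ∀ k, k ≤ n → k ≤ S v k) :
    nblocks (ptn v) = (univ.filter fun i => v i ≠ 0).card := by
  have h2 : Nat.card {i : Fin n // v i ≠ 0} = Nat.card (Quotient (ptn v)) := by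
    apply Nat.card_eq_of_bijective (fun i => Quotient.mk (ptn v) i.val)
    constructor
    · rintro ⟨x, hx⟩ ⟨y, hy⟩ h
      have hr : (ptn v).r x y := Quotient.exact h
      rw [ptn_r, om_opener hx, om_opener hy] at hr
      exact Subtype.ext hr
    · intro q
      obtain ⟨x, rfl⟩ := Quotient.exists_rep q
      refine ⟨⟨om v x, v_om_ne hg x⟩, Quotient.sound ?_⟩
      show (ptn v).r (om v x) x
      rw [ptn_r, om_om hg]
  rw [nblocks, ← h2, Nat.card_eq_fintype_card, Fintype.card_subtype]

lemma strt_ptn (hg : ∀ k, k ≤ n → k ≤ S v k) (i : Fin n) :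
    strt (ptn v) i = om v i := by
  apply le_antisymm
  · apply Finset.min'_le
    rw [mem_blk, ptn_r, om_om hg]
  · apply Finset.le_min'
    intro y hy
    rw [mem_blk, ptn_r] at hy
    calc om v i = om v y := by rw [hy]
      _ ≤ y := om_le_self y

lemma wrd_ptn (hg : ∀ k, k ≤ n → k ≤ S v k) (hs : ∑ i, v i = n) :
    wrd (ptn v) = v := by
  funext i
  rw [wrd, strt_ptn hg]
  by_cases hv : v i ≠ 0
  · rw [if_pos (om_opener hv)]
    have : blk (ptn v) i = (univ.filter fun j => om v j = om v i) := by
      ext x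
      simp only [mem_blk, mem_filter, mem_univ, true_and]
      exact ⟨fun h => ((ptn_r v).1 h).symm, fun h => (ptn_r v).2 h.symm⟩
    rw [this, fiber_card_eq hg hs (om v i) (v_om_ne hg i), om_opener hv]
  · push_neg at hv
    rw [if_neg, hv]
    intro h
    have h1 : oo v i = i.val := congrArg Fin.val h
    have := oo_lt_closer hg hv
    omega

end NC

namespace NC
open Finset
open scoped Classical

variable {n : ℕ} (π : Setoid (Fin n))

noncomputable def E (k : ℕ) : ℕ :=
  (univ.filter fun x : Fin n => k ≤ x.val ∧ (strt π x).val < k).card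

lemma S_wrd_decomp (k : ℕ) (hk : k ≤ n) : S (wrd π) k = k + E π k := by
  rw [S_wrd]
  have hsplit : (univ.filter fun x => (strt π x).val < k)
      = (univ.filter fun x : Fin n => x.val < k)
        ∪ (univ.filter fun x : Fin n => k ≤ x.val ∧ (strt π x).val < k) := by
    ext x
    simp only [mem_filter, mem_univ, true_and, Finset.mem_union]
    constructor
    · intro h
      rcases lt_or_ge x.val k with h1 | h1
      · exact Or.inl h1
      · exact Or.inr ⟨h1, h⟩
    · rintro (h | ⟨h1, h⟩)
      · exact lt_of_le_of_lt (Fin.le_def.1 (strt_le_self π x)) h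
      · exact h
  rw [hsplit, Finset.card_union_of_disjoint, card_filter_val_lt k hk, E]
  rw [Finset.disjoint_filter]
  intro x _ h1 h2
  omega

section NCfacts

variable {π}
variable (hnc : IsNoncrossing π)
include hnc

lemma hnc' : ∀ a b c d : Fin n, a < b → b < c → c < d → π.r a c → π.r b d → π.r a b := by
  intro a b c d h1 h2 h3 h4 h5
  by_contra h6
  exact hnc ⟨a, b, c, d, h1, h2, h3, h4, h5, h6⟩

/-- no block started before `strt π j` has an element in `[strt π j, j]` -/
lemma no_early_block {j x : Fin n} (hmx : (strt π j).val ≤ x.val) (hxj : x.val ≤ j.val)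
    (hx : (strt π x).val < (strt π j).val) : False := by
  have hne : strt π x ≠ strt π j := by
    intro h
    rw [h] at hx
    omega
  rcases eq_or_lt_of_le hxj with hej | hj
  · have : x = j := Fin.ext hej
    subst this
    omega
  rcases eq_or_lt_of_le hmx with hem | hm
  · have : strt π j = x := Fin.ext hem
    have h2 : strt π x = strt π j := by
      rw [this]
      rw [← this, strt_strt]
    exact hne h2
  · -- strt π j < x < j
    have hr : π.r (strt π x) (strt π j) := by
      apply hnc' hnc (strt π x) (strt π j) x j
      · exact Fin.lt_def.2 (by omega)
      · exact Fin.lt_def.2 (by omega)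
      · exact Fin.lt_def.2 (by omega)
      · exact π.iseqv.symm (r_strt π x)
      · exact π.iseqv.symm (r_strt π j)
    have h2 := strt_congr π hr
    rw [strt_strt, strt_strt] at h2
    rw [h2] at hx
    omega

/-- blocks reaching past `j` and started by `j` must start before `strt π j` (when `strt π j < strt π x`is impossible) -/
lemma late_block_early_start {j x : Fin n} (hjx : j.val < x.val)
    (hsx : (strt π x).val ≤ j.val) : (strt π x).val ≤ (strt π j).val := by
  by_contra h
  push_neg at h
  have hne : (strt π x).val ≠ j.val := by
    intro he
    have hxj : strt π x = j := Fin.ext he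
    have h2 : strt π j = strt π x := by
      rw [← hxj]
      exact strt_strt π x
    have h3 := congrArg Fin.val h2
    omega
  have hr : π.r (strt π j) (strt π x) := by
    apply hnc' hnc (strt π j) (strt π x) j x
    · exact Fin.lt_def.2 (by omega)
    · exact Fin.lt_def.2 (by omega)
    · exact Fin.lt_def.2 (by omega)
    · exact π.iseqv.symm (r_strt π j)
    · exact π.iseqv.symm (r_strt π x)
  have h2 := strt_congr π hr
  rw [strt_strt, strt_strt] at h2
  rw [← h2] at h
  omega

lemma E_mono {j : Fin n} (hj : strt π j ≠ j) :
    E π (strt π j).val ≤ E π (j.val + 1) := by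
  apply Finset.card_le_card
  intro x hx
  simp only [E, mem_filter, mem_univ, true_and] at hx ⊢
  obtain ⟨h1, h2⟩ := hx
  have hxj : j.val + 1 ≤ x.val := by
    by_contra h
    push_neg at h
    exact no_early_block hnc h1 (by omega) h2
  have := (strt π j).isLt
  have hms := Fin.le_def.1 (strt_le_self π j)
  exact ⟨hxj, by omega⟩

lemma E_strict {j : Fin n} (hj : strt π j ≠ j) {i : ℕ} (hmi : (strt π j).val < i)
    (hij : i ≤ j.val) : E π (j.val + 1) < E π i := by
  have hsub : insert j (univ.filter fun x : Fin n => j.val + 1 ≤ x.val ∧ (strt π x).val < j.val + 1)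
      ⊆ (univ.filter fun x : Fin n => i ≤ x.val ∧ (strt π x).val < i) := by
    intro x hx
    rcases Finset.mem_insert.1 hx with rfl | hx
    · simp only [mem_filter, mem_univ, true_and]
      exact ⟨by omega, by omega⟩
    · simp only [mem_filter, mem_univ, true_and] at hx ⊢
      obtain ⟨h1, h2⟩ := hx
      have := late_block_early_start hnc (x := x) (j := j) (by omega) (by omega)
      exact ⟨by omega, by omega⟩
  have hnotmem : j ∉ (univ.filter fun x : Fin n => j.val + 1 ≤ x.val ∧ (strt π x).val < j.val + 1) := by
    simp only [mem_filter, mem_univ, true_and]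
    omega
  have := Finset.card_le_card hsub
  rw [Finset.card_insert_of_notMem hnotmem] at this
  unfold E
  omega

lemma om_wrd (j : Fin n) : om (wrd π) j = strt π j := by
  by_cases hj : strt π j = j
  · have : wrd π j ≠ 0 := (wrd_ne_zero_iff π j).2 hj
    rw [om_opener this, hj]
  · have hw0 : wrd π j = 0 := by
      by_contra h
      exact hj ((wrd_ne_zero_iff π j).1 h)
    have hg := S_wrd_ge π
    have hmj : (strt π j).val ≤ j.val := strt_le_self π j
    have hmlt : (strt π j).val < j.val := by
      rcases eq_or_lt_of_le hmj with h | h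
      · exact absurd (Fin.ext h) hj
      · exact h
    -- cnd holds at (strt π j).val
    have hcnd : cnd (wrd π) j.val (strt π j).val := by
      rw [cnd, S_wrd_decomp π _ (by omega), S_wrd_decomp π _ (by omega : j.val + 1 ≤ n)]
      have := E_mono hnc hj
      omega
    have hncnd : ∀ i, (strt π j).val < i → i ≤ j.val → ¬ cnd (wrd π) j.val i := by
      intro i h1 h2 hc
      rw [cnd, S_wrd_decomp π _ (by omega), S_wrd_decomp π _ (by omega : j.val + 1 ≤ n)] at hc
      have := E_strict hnc hj h1 h2
      omega
    apply Fin.ext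
    show oo (wrd π) j = (strt π j).val
    rw [oo_closer hg hw0]
    apply le_antisymm
    · by_contra h
      push_neg at h
      have hle := Nat.findGreatest_le (P := cnd (wrd π) j.val) (n := j.val)
      have hspec : cnd (wrd π) j.val (Nat.findGreatest (cnd (wrd π) j.val) j.val) :=
        Nat.findGreatest_spec (m := (strt π j).val) (by omega) hcnd
      exact hncnd _ h hle hspec
    · exact Nat.le_findGreatest (by omega) hcnd

lemma ptn_wrd : ptn (wrd π) = π := by
  apply Setoid.ext
  intro a b
  show (ptn (wrd π)).r a b ↔ π.r a b
  rw [ptn_r, om_wrd hnc, om_wrd hnc, ← r_iff_strt]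

end NCfacts
end NC

namespace NC
open Finset
open scoped Classical

variable {n : ℕ}

def IsGoodWord (n r : ℕ) (v : Fin n → ℕ) : Prop :=
  (∀ i, Even (v i)) ∧ (∀ k, k ≤ n → k ≤ S v k) ∧ (∑ i, v i = n) ∧
    (univ.filter fun i => v i ≠ 0).card = r

noncomputable def mainEquiv (n r : ℕ) :
    {π : Setoid (Fin n) // IsNoncrossing π ∧ (∀ i, Even (Nat.card {j : Fin n // π.r i j})) ∧
      nblocks π = r} ≃ {v : Fin n → ℕ // IsGoodWord n r v} where
  toFun π := ⟨wrd π.val, by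
    obtain ⟨hnc, hev, hnb⟩ := π.prop
    refine ⟨?_, S_wrd_ge π.val, sum_wrd π.val, by rw [count_openers π.val, hnb]⟩
    intro i
    rw [wrd]
    split
    · rw [blk_card_eq]
      exact hev i
    · exact Even.zero⟩
  invFun v := ⟨ptn v.val, by
    obtain ⟨hev, hg, hs, hcnt⟩ := v.prop
    refine ⟨ptn_noncrossing hg, ?_, by rw [ptn_nblocks hg, hcnt]⟩
    intro i
    rw [ptn_blockcard hg hs i]
    exact hev _⟩
  left_inv := by
    rintro ⟨π, hnc, hev, hnb⟩
    exact Subtype.ext (ptn_wrd hnc)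
  right_inv := by
    rintro ⟨v, hev, hg, hs, hcnt⟩
    exact Subtype.ext (wrd_ptn hg hs)

/-- extended words of length `n+1`: total sum `n`, even entries, `r` nonzero entries -/
def IsPre (n r : ℕ) (w : Fin (n + 1) → ℕ) : Prop :=
  (∀ i, Even (w i)) ∧ (∑ i, w i = n) ∧ (univ.filter fun i => w i ≠ 0).card = r

lemma exd_snoc (v : Fin n → ℕ) {i : ℕ} (hi : i < n) :
    exd (Fin.snoc v 0 : Fin (n+1) → ℕ) i = exd v i := by
  rw [exd, exd, dif_pos hi, dif_pos (by omega : i < n + 1)]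
  have : (⟨i, by omega⟩ : Fin (n+1)) = Fin.castSucc ⟨i, hi⟩ := rfl
  rw [this, Fin.snoc_castSucc]

lemma S_snoc (v : Fin n → ℕ) {k : ℕ} (hk : k ≤ n) :
    S (Fin.snoc v 0 : Fin (n+1) → ℕ) k = S v k := by
  unfold S
  apply Finset.sum_congr rfl
  intro i hi
  rw [Finset.mem_range] at hi
  exact exd_snoc v (by omega)

lemma card_filter_snoc (v : Fin n → ℕ) :
    (univ.filter fun i => (Fin.snoc v 0 : Fin (n+1) → ℕ) i ≠ 0).card
      = (univ.filter fun i => v i ≠ 0).card := by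
  rw [Finset.card_filter, Finset.card_filter, Fin.sum_univ_castSucc]
  simp [Fin.snoc_castSucc, Fin.snoc_last]

lemma w_last_eq_zero {w : Fin (n + 1) → ℕ} (hs : ∑ i, w i = n)
    (hg : ∀ k, k ≤ n → k ≤ S w k) : w (Fin.last n) = 0 := by
  have h1 : S w (n + 1) = ∑ i, w i := S_top w
  have h2 : S w (n + 1) = S w n + exd w n := S_succ w n
  have h3 : exd w n = w (Fin.last n) := by
    rw [exd, dif_pos (by omega : n < n + 1)]
    rfl
  have h4 := hg n (le_refl n)
  rw [hs] at h1
  omega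

noncomputable def extEquiv (n r : ℕ) :
    {v : Fin n → ℕ // IsGoodWord n r v} ≃
      {w : Fin (n + 1) → ℕ // IsPre n r w ∧ ∀ k, k ≤ n → k ≤ S w k} where
  toFun v := ⟨Fin.snoc v.val 0, by
    obtain ⟨hev, hg, hs, hcnt⟩ := v.prop
    refine ⟨⟨?_, ?_, ?_⟩, ?_⟩
    · intro i
      refine Fin.lastCases ?_ ?_ i
      · rw [Fin.snoc_last]
        exact Even.zero
      · intro j
        rw [Fin.snoc_castSucc]
        exact hev j
    · rw [Fin.sum_univ_castSucc]
      simp only [Fin.snoc_castSucc, Fin.snoc_last, add_zero]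
      exact hs
    · rw [card_filter_snoc, hcnt]
    · intro k hk
      rw [S_snoc v.val hk]
      exact hg k hk⟩
  invFun w := ⟨fun i => w.val (Fin.castSucc i), by
    obtain ⟨⟨hev, hs, hcnt⟩, hg⟩ := w.prop
    have hlast := w_last_eq_zero hs hg
    refine ⟨fun i => hev _, ?_, ?_, ?_⟩
    · intro k hk
      have hSeq : S (fun i => w.val (Fin.castSucc i)) k = S w.val k := by
        unfold S
        apply Finset.sum_congr rfl
        intro i hi
        rw [Finset.mem_range] at hi
        rw [exd, exd, dif_pos (by omega : i < n), dif_pos (by omega : i < n + 1)]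
        rfl
      rw [hSeq]
      exact hg k hk
    · have h5 := Fin.sum_univ_castSucc (f := w.val)
      rw [hlast, add_zero] at h5
      rw [← h5, hs]
    · have hceq : (univ.filter fun i : Fin n => w.val (Fin.castSucc i) ≠ 0).card
          = (univ.filter fun i : Fin (n+1) => w.val i ≠ 0).card := by
        rw [Finset.card_filter, Finset.card_filter, Fin.sum_univ_castSucc, hlast]
        simp
      exact hceq.trans hcnt⟩
  left_inv := by
    rintro ⟨v, hv⟩
    apply Subtype.ext
    funext i
    simp [Fin.snoc_castSucc]
  right_inv := by
    rintro ⟨w, ⟨hev, hs, hcnt⟩, hg⟩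
    apply Subtype.ext
    have hlast := w_last_eq_zero hs hg
    show (Fin.snoc (fun i : Fin n => w (Fin.castSucc i)) 0 : Fin (n+1) → ℕ) = w
    funext i
    refine Fin.lastCases ?_ ?_ i
    · rw [Fin.snoc_last, hlast]
    · intro j
      rw [Fin.snoc_castSucc]

end NC

namespace NC
open Finset
open scoped Classical

section Cycle
open scoped Fin.NatCast Fin.CommRing

variable {N : ℕ} [NeZero N]

noncomputable def rotW (c : ℕ) (w : Fin N → ℕ) : Fin N → ℕ := fun i => w (i + (c : Fin N))

def wc (w : Fin N → ℕ) (i : ℕ) : ℕ := w ((i : ℕ) : Fin N)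

def T (w : Fin N → ℕ) (m : ℕ) : ℕ := ∑ i ∈ Finset.range m, wc w i

lemma T_succ (w : Fin N → ℕ) (m : ℕ) : T w (m + 1) = T w m + wc w m :=
  Finset.sum_range_succ _ _

lemma T_N (w : Fin N → ℕ) : T w N = ∑ i, w i := by
  rw [T, ← Fin.sum_univ_eq_sum_range]
  exact Finset.sum_congr rfl fun i _ => by rw [wc, Fin.cast_val_eq_self]

lemma wc_add_N (w : Fin N → ℕ) (m : ℕ) : wc w (m + N) = wc w m := by
  rw [wc, wc]
  congr 1
  push_cast
  simp [Fin.natCast_self]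

lemma T_period (w : Fin N → ℕ) (m : ℕ) : T w (m + N) = T w m + ∑ i, w i := by
  induction m with
  | zero => rw [zero_add, T_N]; simp [T]
  | succ m ih =>
    have h1 : m + 1 + N = (m + N) + 1 := by omega
    rw [h1, T_succ, ih, wc_add_N, T_succ]
    ring

lemma exd_rot (w : Fin N → ℕ) (c : ℕ) {k : ℕ} (hk : k < N) :
    exd (rotW c w) k = wc w (c + k) := by
  rw [exd, dif_pos hk, rotW, wc]
  congr 1
  apply Fin.ext
  rw [Fin.add_def]
  simp only [Fin.val_natCast]
  conv_rhs => rw [Nat.add_mod]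
  rw [Nat.mod_eq_of_lt hk, Nat.add_comm]

lemma S_rot (w : Fin N → ℕ) (c : ℕ) : ∀ k, k ≤ N → S (rotW c w) k + T w c = T w (c + k) := by
  intro k
  induction k with
  | zero => intro _; simp [S]
  | succ k ih =>
    intro hk
    rw [S_succ, exd_rot w c (by omega : k < N), show c + (k+1) = (c+k)+1 by omega, T_succ]
    have := ih (by omega)
    omega

noncomputable def L (w : Fin N → ℕ) (k : ℕ) : ℤ := (T w k : ℤ) - k

/-- `c` is a good starting point -/
def GS (w : Fin N → ℕ) (c : ℕ) : Prop := ∀ k, k < N → L w c ≤ L w (c + k)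

lemma L_period {w : Fin N → ℕ} (hsum : (∑ i, w i) + 1 = N) (m : ℕ) :
    L w (m + N) = L w m - 1 := by
  rw [L, L, T_period, Nat.cast_add]
  omega

lemma rot_good_iff (w : Fin N → ℕ) (c : ℕ) :
    (∀ k, k < N → k ≤ S (rotW c w) k) ↔ GS w c := by
  unfold GS L
  constructor
  · intro h k hk
    have hS := S_rot w c k (by omega)
    have h2 := h k hk
    omega
  · intro h k hk
    have hS := S_rot w c k (by omega)
    have h2 := h k hk
    omega

lemma exists_Q (w : Fin N → ℕ) : ∃ c, c < N ∧ ∀ k, k < N → L w c ≤ L w k := by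
  obtain ⟨c, hc, hmin⟩ := Finset.exists_min_image (Finset.range N) (L w)
    ⟨0, Finset.mem_range.2 (Nat.pos_of_ne_zero (NeZero.ne N))⟩
  exact ⟨c, Finset.mem_range.1 hc, fun k hk => hmin k (Finset.mem_range.2 hk)⟩

noncomputable def gshift (w : Fin N → ℕ) : ℕ := Nat.find (exists_Q w)

lemma gshift_lt (w : Fin N → ℕ) : gshift w < N := (Nat.find_spec (exists_Q w)).1

lemma gshift_min (w : Fin N → ℕ) : ∀ k, k < N → L w (gshift w) ≤ L w k :=
  (Nat.find_spec (exists_Q w)).2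

lemma gshift_gs {w : Fin N → ℕ} (hsum : (∑ i, w i) + 1 = N) : GS w (gshift w) := by
  intro k hk
  by_cases h : gshift w + k < N
  · exact gshift_min w _ h
  · push_neg at h
    have hgl := gshift_lt w
    have heq : gshift w + k = (gshift w + k - N) + N := by omega
    rw [heq, L_period hsum]
    have hQj := Nat.find_min (exists_Q w) (show gshift w + k - N < gshift w by omega)
    push_neg at hQj
    obtain ⟨k', hk', hgt⟩ := hQj (by omega)
    have h1 := gshift_min w k' hk'
    omega

lemma gs_unique {w : Fin N → ℕ} (hsum : (∑ i, w i) + 1 = N) {c c' : ℕ}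
    (hc : c < N) (hc' : c' < N) (h : GS w c) (h' : GS w c') : c = c' := by
  rcases lt_trichotomy c c' with hlt | he | hlt
  · exfalso
    have h1 := h (c' - c) (by omega)
    rw [show c + (c' - c) = c' by omega] at h1
    have h2 := h' (c + N - c') (by omega)
    rw [show c' + (c + N - c') = c + N by omega, L_period hsum] at h2
    omega
  · exact he
  · exfalso
    have h1 := h' (c - c') (by omega)
    rw [show c' + (c - c') = c by omega] at h1
    have h2 := h (c' + N - c) (by omega)
    rw [show c + (c' + N - c) = c' + N by omega, L_period hsum] at h2
    omega

lemma sum_rot (w : Fin N → ℕ) (c : ℕ) : ∑ i, rotW c w i = ∑ i, w i :=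
  Fintype.sum_equiv (Equiv.addRight ((c : ℕ) : Fin N)) _ _ (fun _ => rfl)

lemma count_rot (w : Fin N → ℕ) (c : ℕ) :
    (univ.filter fun i => rotW c w i ≠ 0).card = (univ.filter fun i => w i ≠ 0).card := by
  rw [Finset.card_filter, Finset.card_filter]
  exact Fintype.sum_equiv (Equiv.addRight ((c : ℕ) : Fin N)) _ _ (fun _ => rfl)

lemma rot_rot (w : Fin N → ℕ) (c c' : ℕ) : rotW c (rotW c' w) = rotW (c' + c) w := by
  funext i
  rw [rotW, rotW, rotW]
  congr 1
  push_cast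
  ring

lemma rot_N (w : Fin N → ℕ) : rotW N w = w := by
  funext i
  rw [rotW, Fin.natCast_self, add_zero]

end Cycle
end NC

namespace NC
open Finset
open scoped Classical

variable {n r : ℕ}

lemma pre_rot {w : Fin (n+1) → ℕ} (c : ℕ) (h : IsPre n r w) : IsPre n r (rotW c w) :=
  ⟨fun i => h.1 _, (sum_rot w c).trans h.2.1, (count_rot w c).trans h.2.2⟩

noncomputable def cycleEquiv (n r : ℕ) :
    ({w : Fin (n + 1) → ℕ // IsPre n r w ∧ ∀ k, k ≤ n → k ≤ S w k} × Fin (n + 1))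
      ≃ {w : Fin (n + 1) → ℕ // IsPre n r w} where
  toFun p := ⟨rotW ((n + 1) - p.2.val) p.1.val, pre_rot _ p.1.prop.1⟩
  invFun w := (⟨rotW (gshift w.val) w.val, pre_rot _ w.prop, by
      have hsum : (∑ i, w.val i) + 1 = n + 1 := by rw [w.prop.2.1]
      intro k hk
      exact (rot_good_iff w.val (gshift w.val)).2 (gshift_gs hsum) k (by omega)⟩,
    ⟨gshift w.val, gshift_lt w.val⟩)
  left_inv := by
    rintro ⟨⟨u, hu, hgood⟩, d⟩
    have hd := d.isLt
    have hsum : (∑ i, (rotW ((n+1) - d.val) u) i) + 1 = n + 1 := by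
      rw [sum_rot, hu.2.1]
    have hrd : rotW d.val (rotW ((n+1) - d.val) u) = u := by
      rw [rot_rot, show (n+1) - d.val + d.val = n + 1 by omega, rot_N]
    have hGS : GS (rotW ((n+1) - d.val) u) d.val :=
      (rot_good_iff _ d.val).1 (fun k hk => by rw [hrd]; exact hgood k (by omega))
    have hgd : gshift (rotW ((n+1) - d.val) u) = d.val :=
      gs_unique hsum (gshift_lt _) hd (gshift_gs hsum) hGS
    refine Prod.ext ?_ ?_
    · apply Subtype.ext
      show rotW (gshift (rotW ((n+1) - d.val) u)) (rotW ((n+1) - d.val) u) = u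
      rw [hgd, hrd]
    · apply Fin.ext
      show gshift (rotW ((n+1) - d.val) u) = d.val
      exact hgd
  right_inv := by
    rintro ⟨w, hw⟩
    apply Subtype.ext
    show rotW ((n + 1) - gshift w) (rotW (gshift w) w) = w
    have := gshift_lt w
    rw [rot_rot, show gshift w + ((n+1) - gshift w) = n + 1 by omega, rot_N]

lemma card_pre_eq (n r : ℕ) :
    Nat.card {w : Fin (n + 1) → ℕ // IsPre n r w}
      = (Nat.card {w : Fin (n + 1) → ℕ // IsPre n r w ∧ ∀ k, k ≤ n → k ≤ S w k}) * (n + 1) := by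
  rw [← Nat.card_congr (cycleEquiv n r), Nat.card_prod]
  congr 1
  rw [Nat.card_eq_fintype_card, Fintype.card_fin]

end NC

namespace NC
open Finset
open scoped Classical

variable {n r : ℕ}

lemma even_decomp {a : ℕ} (he : Even a) (hne : a ≠ 0) : a = 2 * ((a - 2) / 2) + 2 := by
  obtain ⟨b, hb⟩ := he
  omega

noncomputable def mkw (A : Finset (Fin (n + 1))) (hA : A.card = r) (g : Fin r → ℕ) :
    Fin (n + 1) → ℕ :=
  fun i => if h : i ∈ A then 2 * g ((A.orderIsoOfFin hA).symm ⟨i, h⟩) + 2 else 0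

noncomputable def gOf (s : Finset (Fin (n + 1))) (hs : s.card = r) (w : Fin (n + 1) → ℕ) :
    Fin r → ℕ :=
  fun t => (w ((s.orderIsoOfFin hs t) : Fin (n + 1)) - 2) / 2

lemma gOf_congr {s s' : Finset (Fin (n + 1))} (h : s = s') (hs : s.card = r)
    (hs' : s'.card = r) (w : Fin (n + 1) → ℕ) : gOf s hs w = gOf s' hs' w := by
  subst h
  rfl

lemma sum_over_supp (w : Fin (n + 1) → ℕ) (hs : (univ.filter fun i => w i ≠ 0).card = r) :
    ∑ t : Fin r, w (((univ.filter fun i => w i ≠ 0).orderIsoOfFin hs t) : Fin (n + 1))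
      = ∑ i, w i := by
  conv_rhs => rw [← Finset.sum_filter_ne_zero univ]
  rw [← Finset.sum_coe_sort (univ.filter fun i => w i ≠ 0) w]
  exact Fintype.sum_equiv ((univ.filter fun i => w i ≠ 0).orderIsoOfFin hs).toEquiv _ _
    (fun t => rfl)

lemma mkw_supp (A : Finset (Fin (n + 1))) (hA : A.card = r) (g : Fin r → ℕ) :
    (univ.filter fun i => mkw A hA g i ≠ 0) = A := by
  ext i
  simp only [mem_filter, mem_univ, true_and, mkw]
  by_cases h : i ∈ A
  · simp [h]
  · simp [h]

lemma mkw_sum (A : Finset (Fin (n + 1))) (hA : A.card = r) (g : Fin r → ℕ) :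
    ∑ i, mkw A hA g i = 2 * (∑ t, g t) + 2 * r := by
  rw [← Finset.sum_filter_ne_zero univ, mkw_supp A hA g]
  rw [← Finset.sum_coe_sort A (mkw A hA g)]
  have h1 : ∀ x : {y // y ∈ A}, mkw A hA g x.val = 2 * g ((A.orderIsoOfFin hA).symm x) + 2 := by
    intro x
    rw [mkw, dif_pos x.prop]
  rw [Finset.sum_congr rfl (fun x _ => h1 x)]
  have h2 : ∑ x : {y // y ∈ A}, (2 * g ((A.orderIsoOfFin hA).symm x) + 2)
      = ∑ t : Fin r, (2 * g t + 2) :=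
    Fintype.sum_equiv ((A.orderIsoOfFin hA).toEquiv.symm) _ _ (fun x => rfl)
  rw [h2, Finset.sum_add_distrib, ← Finset.mul_sum]
  simp [Finset.sum_const, Fintype.card_fin, mul_comm]

noncomputable def preEquiv (l r : ℕ) (hr1 : 1 ≤ r) (hrl : r ≤ l) :
    {w : Fin (2 * l + 1) → ℕ // IsPre (2 * l) r w} ≃
      ({A : Finset (Fin (2 * l + 1)) // A.card = r} × {g : Fin r → ℕ // ∑ t, g t = l - r}) where
  toFun w := by
    refine ⟨⟨univ.filter fun i => w.val i ≠ 0, w.prop.2.2⟩,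
      ⟨gOf _ w.prop.2.2 w.val, ?_⟩⟩
    obtain ⟨hev, hsum, hcnt⟩ := w.prop
    have h1 := sum_over_supp w.val hcnt
    have h2 : ∀ t : Fin r,
        w.val (((univ.filter fun i => w.val i ≠ 0).orderIsoOfFin hcnt t) : Fin (2 * l + 1))
          = 2 * gOf _ hcnt w.val t + 2 := by
      intro t
      have hmem := (((univ.filter fun i => w.val i ≠ 0).orderIsoOfFin hcnt t)).prop
      simp only [mem_filter, mem_univ, true_and] at hmem
      exact even_decomp (hev _) hmem
    rw [Finset.sum_congr rfl (fun t _ => h2 t)] at h1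
    rw [Finset.sum_add_distrib, ← Finset.mul_sum] at h1
    simp only [Finset.sum_const, Finset.card_univ, Fintype.card_fin, smul_eq_mul,
      mul_one, hsum] at h1
    omega
  invFun p := ⟨mkw p.1.val p.1.prop p.2.val, by
    refine ⟨?_, ?_, ?_⟩
    · intro i
      rw [mkw]
      split
      · next h => exact ⟨p.2.val ((p.1.val.orderIsoOfFin p.1.prop).symm ⟨i, h⟩) + 1, by ring⟩
      · exact Even.zero
    · rw [mkw_sum, p.2.prop]
      omega
    · rw [mkw_supp]
      exact p.1.prop⟩
  left_inv := by
    rintro ⟨w, hev, hsum, hcnt⟩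
    apply Subtype.ext
    show mkw _ _ _ = w
    funext i
    rw [mkw]
    split
    · next h =>
      simp only [mem_filter, mem_univ, true_and] at h
      simp only [gOf]
      have harg : (((univ.filter fun i => w i ≠ 0).orderIsoOfFin hcnt)
          (((univ.filter fun i => w i ≠ 0).orderIsoOfFin hcnt).symm
            ⟨i, by simp [h]⟩) : Fin (2 * l + 1)) = i := by
        rw [OrderIso.apply_symm_apply]
      rw [harg]
      exact (even_decomp (hev i) h).symm
    · next h =>
      simp only [mem_filter, mem_univ, true_and, not_not] at h
      exact h.symm
  right_inv := by
    rintro ⟨⟨A, hA⟩, ⟨g, hg⟩⟩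
    have hsupp := mkw_supp A hA g
    refine Prod.ext (Subtype.ext ?_) (Subtype.ext ?_)
    · exact hsupp
    · show gOf _ _ (mkw A hA g) = g
      rw [gOf_congr hsupp _ hA]
      funext t
      simp only [gOf, mkw]
      rw [dif_pos ((A.orderIsoOfFin hA t).prop)]
      have : ((A.orderIsoOfFin hA).symm ⟨((A.orderIsoOfFin hA t) : Fin (2 * l + 1)),
          (A.orderIsoOfFin hA t).prop⟩) = t := by
        rw [show (⟨((A.orderIsoOfFin hA t) : Fin (2 * l + 1)), (A.orderIsoOfFin hA t).prop⟩ :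
            {x // x ∈ A}) = A.orderIsoOfFin hA t from Subtype.ext rfl]
        rw [OrderIso.symm_apply_apply]
      rw [this]
      omega

noncomputable def starsBars (r m : ℕ) : {g : Fin r → ℕ // ∑ t, g t = m} ≃ Sym (Fin r) m := by
  refine Equiv.subtypeEquiv
    (Finsupp.equivFunOnFinite.symm.trans (Multiset.toFinsupp (α := Fin r)).symm.toEquiv) ?_
  intro g
  show (∑ t, g t = m) ↔ _
  simp only [Equiv.trans_apply]
  rw [show ((Multiset.toFinsupp (α := Fin r)).symm.toEquiv (Finsupp.equivFunOnFinite.symm g))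
      = Finsupp.toMultiset (Finsupp.equivFunOnFinite.symm g) from rfl]
  rw [Finsupp.card_toMultiset, Finsupp.sum_fintype _ _ (fun _ => rfl)]
  simp [Finsupp.equivFunOnFinite]

lemma card_sum_fin (r m : ℕ) :
    Nat.card {g : Fin r → ℕ // ∑ t, g t = m} = Nat.multichoose r m := by
  rw [Nat.card_congr (starsBars r m), Nat.card_eq_fintype_card,
    Sym.card_sym_eq_multichoose, Fintype.card_fin]

end NC

lemma NC.multichoose_aux (l r : ℕ) (hr1 : 1 ≤ r) (hrl : r ≤ l) :
    Nat.multichoose r (l - r) = (l - 1).choose (r - 1) := by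
  rw [Nat.multichoose_eq]
  rw [show r + (l - r) - 1 = l - 1 by omega]
  rw [show l - r = (l - 1) - (r - 1) by omega]
  exact Nat.choose_symm (by omega)

/-- The number of noncrossing partitions of `{1,…,2l}` with all blocks of even size and
exactly `r` blocks equals `(1/r)·binom(l-1,r-1)·binom(2l,r-1)`. -/
theorem card_nc_even_partitions_with_r_blocks (l r : ℕ) (hr1 : 1 ≤ r) (hrl : r ≤ l) :
    r * Nat.card {π : Setoid (Fin (2 * l)) //
        IsNoncrossing π ∧ (∀ i, Even (Nat.card {j : Fin (2 * l) // π.r i j})) ∧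
        nblocks π = r} =
      (l - 1).choose (r - 1) * (2 * l).choose (r - 1) := by
  classical
  have e1 := Nat.card_congr ((NC.mainEquiv (2 * l) r).trans (NC.extEquiv (2 * l) r))
  have e2 := NC.card_pre_eq (2 * l) r
  have e3 := Nat.card_congr (NC.preEquiv l r hr1 hrl)
  rw [Nat.card_prod] at e3
  have e4 : Nat.card {A : Finset (Fin (2 * l + 1)) // A.card = r} = (2 * l + 1).choose r := by
    rw [Nat.card_eq_fintype_card, Fintype.card_finset_len, Fintype.card_fin]
  have e5 := NC.card_sum_fin r (l - r)
  have e6 := NC.multichoose_aux l r hr1 hrl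
  rw [e4, e5, e6] at e3
  rw [e1]
  set G := Nat.card {w : Fin (2 * l + 1) → ℕ //
      NC.IsPre (2 * l) r w ∧ ∀ k, k ≤ 2 * l → k ≤ NC.S w k} with hG
  have key : G * (2 * l + 1) = (2 * l + 1).choose r * (l - 1).choose (r - 1) := by
    rw [← e2, e3]
  have hmul := Nat.add_one_mul_choose_eq (2 * l) (r - 1)
  have hr' : r - 1 + 1 = r := Nat.succ_pred_eq_of_pos hr1
  rw [hr'] at hmul
  apply Nat.eq_of_mul_eq_mul_left (Nat.succ_pos (2 * l))
  calc (2 * l + 1) * (r * G) = r * (G * (2 * l + 1)) := by ring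
    _ = r * ((2 * l + 1).choose r * (l - 1).choose (r - 1)) := by rw [key]
    _ = ((2 * l + 1).choose r * r) * (l - 1).choose (r - 1) := by ring
    _ = ((2 * l + 1) * (2 * l).choose (r - 1)) * (l - 1).choose (r - 1) := by rw [hmul]
    _ = (2 * l + 1) * ((l - 1).choose (r - 1) * (2 * l).choose (r - 1)) := by ring
end

section
/- The number of noncrossing partitions of {1,...,2l} with all blocks of even size equals the Fuss–Catalan number (1/(2l+1))·binom(3l, l). -/
open Finset Polynomial

def uN {n : ℕ} (u : Fin n → ℕ) : ℕ → ℕ := fun t => if h : t < n then u ⟨t, h⟩ else 0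
def Hh {n : ℕ} (u : Fin n → ℕ) (k : ℕ) : ℤ :=
  2 * (∑ t ∈ Finset.range k, (uN u t : ℤ)) - k
def GoodW {n : ℕ} (u : Fin n → ℕ) : Prop :=
  (2 * ∑ i, u i = n) ∧ ∀ k ≤ n, 0 ≤ Hh u k
lemma Hh_zero {n : ℕ} (u : Fin n → ℕ) : Hh u 0 = 0 := by simp [Hh]
lemma Hh_succ {n : ℕ} (u : Fin n → ℕ) (k : ℕ) :
    Hh u (k + 1) = Hh u k + 2 * (uN u k) - 1 := by
  simp [Hh, Finset.sum_range_succ]; ring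
noncomputable def Tt {n : ℕ} (u : Fin n → ℕ) (i : Fin n) : Finset ℕ :=
  (Finset.range i.val).filter (fun k => Hh u k < Hh u i.val)
noncomputable def ou {n : ℕ} (u : Fin n → ℕ) (i : Fin n) : Fin n :=
  if h : u i = 0 ∧ (Tt u i).Nonempty then
    ⟨(Tt u i).max' h.2,
      lt_trans (Finset.mem_range.mp (Finset.mem_filter.mp ((Tt u i).max'_mem h.2)).1) i.isLt⟩
  else i
lemma ou_le {n : ℕ} (u : Fin n → ℕ) (i : Fin n) : ou u i ≤ i := by
  unfold ou
  split
  · next h =>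
    exact le_of_lt (Finset.mem_range.mp (Finset.mem_filter.mp ((Tt u i).max'_mem h.2)).1)
  · exact le_refl i
lemma ou_eq_self {n : ℕ} (u : Fin n → ℕ) (i : Fin n) (h : u i ≠ 0) : ou u i = i := by
  unfold ou; rw [dif_neg]; tauto
lemma uN_coe {n : ℕ} (u : Fin n → ℕ) (i : Fin n) : uN u i.val = u i := by
  simp [uN, i.isLt]
lemma good_H_pos {n : ℕ} {u : Fin n → ℕ} (hg : GoodW u) {i : Fin n} (h : u i = 0) :
    1 ≤ Hh u i.val := by
  have h1 : 0 ≤ Hh u (i.val + 1) := hg.2 _ i.isLt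
  rw [Hh_succ, uN_coe, h] at h1
  omega
lemma Tt_nonempty {n : ℕ} {u : Fin n → ℕ} (hg : GoodW u) {i : Fin n} (h : u i = 0) :
    (Tt u i).Nonempty := by
  have hp := good_H_pos hg h
  have hi : 0 < i.val := by
    rcases Nat.eq_zero_or_pos i.val with h0 | h0
    · rw [h0] at hp; rw [Hh_zero] at hp; omega
    · exact h0
  exact ⟨0, Finset.mem_filter.mpr ⟨Finset.mem_range.mpr hi, by rw [Hh_zero]; omega⟩⟩
lemma ou_spec {n : ℕ} {u : Fin n → ℕ} (hg : GoodW u) {i : Fin n} (h : u i = 0) :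
    (ou u i).val = (Tt u i).max' (Tt_nonempty hg h) := by
  unfold ou
  rw [dif_pos ⟨h, Tt_nonempty hg h⟩]
lemma ou_lt {n : ℕ} {u : Fin n → ℕ} (hg : GoodW u) {i : Fin n} (h : u i = 0) :
    ou u i < i := by
  rw [Fin.lt_def, ou_spec hg h]
  exact Finset.mem_range.mp (Finset.mem_filter.mp ((Tt u i).max'_mem _)).1
lemma H_ou_lt {n : ℕ} {u : Fin n → ℕ} (hg : GoodW u) {i : Fin n} (h : u i = 0) :
    Hh u (ou u i).val < Hh u i.val := by
  rw [ou_spec hg h]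
  exact (Finset.mem_filter.mp ((Tt u i).max'_mem _)).2
lemma H_between {n : ℕ} {u : Fin n → ℕ} (hg : GoodW u) {i : Fin n} (h : u i = 0)
    {k : ℕ} (h1 : (ou u i).val < k) (h2 : k < i.val) : Hh u i.val ≤ Hh u k := by
  by_contra hlt
  have hk : k ∈ Tt u i := Finset.mem_filter.mpr ⟨Finset.mem_range.mpr h2, by omega⟩
  have := Finset.le_max' _ _ hk
  rw [ou_spec hg h] at h1
  omega
lemma Tt_le_ou {n : ℕ} {u : Fin n → ℕ} (hg : GoodW u) {i : Fin n} (h : u i = 0)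
    {k : ℕ} (hk : k ∈ Tt u i) : k ≤ (ou u i).val := by
  rw [ou_spec hg h]
  exact Finset.le_max' _ _ hk
lemma H_succ_ou_ge {n : ℕ} {u : Fin n → ℕ} (hg : GoodW u) {i : Fin n} (h : u i = 0) :
    Hh u i.val ≤ Hh u ((ou u i).val + 1) := by
  rcases Nat.lt_or_ge ((ou u i).val + 1) i.val with h1 | h1
  · exact H_between hg h (Nat.lt_succ_self _) h1
  · have h2 : (ou u i).val + 1 = i.val := by
      have := ou_lt hg h; rw [Fin.lt_def] at this; omega
    rw [h2]
lemma u_ou_ne {n : ℕ} {u : Fin n → ℕ} (hg : GoodW u) (i : Fin n) : u (ou u i) ≠ 0 := by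
  by_cases h : u i = 0
  · intro h0
    have h1 := H_succ_ou_ge hg h
    have h2 := H_ou_lt hg h
    rw [Hh_succ, uN_coe, h0] at h1
    omega
  · rw [ou_eq_self u i h]; exact h
lemma ou_ou {n : ℕ} {u : Fin n → ℕ} (hg : GoodW u) (i : Fin n) :
    ou u (ou u i) = ou u i := ou_eq_self u _ (u_ou_ne hg i)

-- NEW: noncrossing and fibers
lemma u_eq_zero_of_ou_lt {n : ℕ} {u : Fin n → ℕ} {i : Fin n} (h : ou u i ≠ i) : u i = 0 := by
  by_contra h0
  exact h (ou_eq_self u i h0)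

lemma nc_ker {n : ℕ} {u : Fin n → ℕ} (hg : GoodW u) : IsNoncrossing (Setoid.ker (ou u)) := by
  rintro ⟨a, b, c, d, hab, hbc, hcd, hac, hbd, hnab⟩
  have hac' : ou u a = ou u c := hac
  have hbd' : ou u b = ou u d := hbd
  have hnab' : ou u a ≠ ou u b := hnab
  have hja : (ou u a).val ≤ a.val := Fin.le_def.mp (ou_le u a)
  have hjb : (ou u b).val ≤ b.val := Fin.le_def.mp (ou_le u b)
  have hab' : a.val < b.val := Fin.lt_def.mp hab
  have hbc' : b.val < c.val := Fin.lt_def.mp hbc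
  have hcd' : c.val < d.val := Fin.lt_def.mp hcd
  have huc : u c = 0 := by
    apply u_eq_zero_of_ou_lt
    intro hcc
    have h1 : ou u a = c := hac'.trans hcc
    rw [h1] at hja
    omega
  have hud : u d = 0 := by
    apply u_eq_zero_of_ou_lt
    intro hdd
    have h1 : ou u b = d := hbd'.trans hdd
    rw [h1] at hjb
    omega
  rcases lt_trichotomy (ou u b).val (ou u a).val with hlt | heq | hlt
  · -- j' < j
    have hub : u b = 0 := by
      apply u_eq_zero_of_ou_lt
      intro hbb
      rw [hbb] at hlt
      omega
    have h1 : Hh u (ou u a).val < Hh u c.val := by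
      rw [hac']; exact H_ou_lt hg huc
    have h2 : Hh u c.val ≤ Hh u b.val := by
      apply H_between hg huc (k := b.val) _ hbc'
      rw [← hac']; omega
    have hmem : (ou u a).val ∈ Tt u b :=
      Finset.mem_filter.mpr ⟨Finset.mem_range.mpr (by omega), by omega⟩
    have := Tt_le_ou hg hub hmem
    omega
  · exact hnab' (Fin.ext heq.symm)
  · -- j < j'
    have h1 : Hh u (ou u b).val < Hh u d.val := by
      rw [hbd']; exact H_ou_lt hg hud
    have h2 : Hh u d.val ≤ Hh u c.val := by
      apply H_between hg hud (k := c.val) _ hcd'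
      rw [← hbd']; omega
    have hmem : (ou u b).val ∈ Tt u c :=
      Finset.mem_filter.mpr ⟨Finset.mem_range.mpr (by omega), by omega⟩
    have := Tt_le_ou hg huc hmem
    rw [← hac'] at this
    omega

noncomputable def fib {n : ℕ} (u : Fin n → ℕ) (j : Fin n) : Finset (Fin n) :=
  Finset.univ.filter (fun i => ou u i = j)

lemma Gf_mem_Ioc {n : ℕ} {u : Fin n → ℕ} (hg : GoodW u) {j i : Fin n}
    (hi : i ∈ fib u j) (hij : i ≠ j) :
    Hh u j.val < Hh u i.val ∧ Hh u i.val ≤ Hh u j.val + 2 * u j - 1 := by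
  have hou : ou u i = j := (Finset.mem_filter.mp hi).2
  have hui : u i = 0 := u_eq_zero_of_ou_lt (by rw [hou]; exact fun h => hij h.symm)
  constructor
  · have := H_ou_lt hg hui; rwa [hou] at this
  · have h1 := H_succ_ou_ge hg hui
    rw [hou, Hh_succ, uN_coe] at h1
    omega

lemma fib_card_le {n : ℕ} {u : Fin n → ℕ} (hg : GoodW u) (j : Fin n) :
    (fib u j).card ≤ 2 * u j := by
  by_cases huj : u j = 0
  · have : fib u j = ∅ := by
      apply Finset.eq_empty_of_forall_notMem
      intro i hi
      exact u_ou_ne hg i (by rw [(Finset.mem_filter.mp hi).2]; exact huj)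
    rw [this, huj]; simp
  · have hmaps : ∀ i ∈ fib u j, (Hh u i.val + 2 * u i : ℤ) ∈
        Finset.Ioc (Hh u j.val) (Hh u j.val + 2 * u j) := by
      intro i hi
      by_cases hij : i = j
      · subst hij
        refine Finset.mem_Ioc.mpr ⟨?_, le_refl _⟩
        have : (0:ℤ) < 2 * u i := by
          have : 0 < u i := Nat.pos_of_ne_zero huj
          push_cast; omega
        omega
      · have h := Gf_mem_Ioc hg hi hij
        have hui : u i = 0 := u_eq_zero_of_ou_lt
          (by rw [(Finset.mem_filter.mp hi).2]; exact fun hh => hij hh.symm)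
        rw [hui]
        refine Finset.mem_Ioc.mpr ⟨by push_cast; omega, by push_cast; omega⟩
    have hkey : ∀ x ∈ fib u j, ∀ y ∈ fib u j, x.val < y.val →
        (Hh u x.val + 2 * u x : ℤ) = Hh u y.val + 2 * u y → False := by
      intro i hi i' hi' hlt heq
      have hij' : i' ≠ j := by
        intro h
        have h3 := (Finset.mem_filter.mp hi).2
        have h4 : j.val ≤ i.val := by rw [← h3]; exact Fin.le_def.mp (ou_le u i)
        rw [h] at hlt
        omega
      have hui' : u i' = 0 := u_eq_zero_of_ou_lt
        (by rw [(Finset.mem_filter.mp hi').2]; exact fun hh => hij' hh.symm)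
      by_cases hij : i = j
      · have h2 := Gf_mem_Ioc hg hi' hij'
        rw [hij, hui'] at heq
        push_cast at heq
        omega
      · have hui : u i = 0 := u_eq_zero_of_ou_lt
          (by rw [(Finset.mem_filter.mp hi).2]; exact fun hh => hij hh.symm)
        rw [hui, hui'] at heq
        push_cast at heq
        -- H i = H i'
        have hHi : Hh u i.val = Hh u i'.val := by omega
        have hstep : Hh u (i.val + 1) = Hh u i.val - 1 := by
          rw [Hh_succ, uN_coe, hui]; push_cast; ring
        rcases Nat.lt_or_ge (i.val + 1) i'.val with hc | hc
        · -- i+1 strictly between ou i' = j and i'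
          have hji : j.val ≤ i.val := by
            have h3 := (Finset.mem_filter.mp hi).2
            have := ou_le u i
            rw [← h3]; exact this
          have hb := H_between hg hui' (k := i.val + 1) ?_ hc
          · omega
          · rw [(Finset.mem_filter.mp hi').2]; omega
        · have : i.val + 1 = i'.val := by omega
          rw [← this] at hHi
          omega
    apply le_trans (Finset.card_le_card_of_injOn _ hmaps ?_) ?_
    · intro i hi i' hi' heq
      by_contra hne
      rcases lt_trichotomy i.val i'.val with h | h | h
      · exact hkey i hi i' hi' h heq
      · exact hne (Fin.ext h)
      · exact hkey i' hi' i hi h heq.symm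
    · rw [Int.card_Ioc]
      simp only [add_sub_cancel_left]
      push_cast
      omega

lemma fib_card {n : ℕ} {u : Fin n → ℕ} (hg : GoodW u) (j : Fin n) :
    (fib u j).card = 2 * u j := by
  have hsum : ∑ j : Fin n, (fib u j).card = n := by
    have := Finset.card_eq_sum_card_fiberwise
      (f := ou u) (s := (Finset.univ : Finset (Fin n))) (t := Finset.univ)
      (fun x _ => Finset.mem_univ _)
    simpa [fib] using this.symm
  have hsum2 : ∑ j : Fin n, 2 * u j = n := by
    rw [← Finset.mul_sum]; exact hg.1
  have := (Finset.sum_eq_sum_iff_of_le (fun i _ => fib_card_le hg i)).mp (by rw [hsum, hsum2])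
  exact this j (Finset.mem_univ j)


section Blk
open Classical in
noncomputable def blk {n : ℕ} (π : Setoid (Fin n)) (i : Fin n) : Finset (Fin n) :=
  Finset.univ.filter (fun j => π.r i j)

lemma mem_blk {n : ℕ} (π : Setoid (Fin n)) (i j : Fin n) :
    j ∈ blk π i ↔ π.r i j := by
  classical simp [blk]

lemma self_mem_blk {n : ℕ} (π : Setoid (Fin n)) (i : Fin n) : i ∈ blk π i :=
  (mem_blk π i i).2 (π.refl' i)

lemma blk_eq_of_rel {n : ℕ} (π : Setoid (Fin n)) {i j : Fin n} (h : π.r i j) :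
    blk π i = blk π j := by
  ext x; simp only [mem_blk]
  exact ⟨fun hx => π.trans' (π.symm' h) hx, fun hx => π.trans' h hx⟩

noncomputable def minb {n : ℕ} (π : Setoid (Fin n)) (i : Fin n) : Fin n :=
  (blk π i).min' ⟨i, self_mem_blk π i⟩

lemma minb_rel {n : ℕ} (π : Setoid (Fin n)) (i : Fin n) : π.r i (minb π i) :=
  (mem_blk π i _).1 ((blk π i).min'_mem _)

lemma minb_le {n : ℕ} (π : Setoid (Fin n)) (i : Fin n) : minb π i ≤ i :=
  Finset.min'_le _ _ (self_mem_blk π i)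

lemma minb_eq_of_rel {n : ℕ} (π : Setoid (Fin n)) {i j : Fin n} (h : π.r i j) :
    minb π i = minb π j := by
  have hb := blk_eq_of_rel π h
  unfold minb
  simp only [hb]

lemma minb_minb {n : ℕ} (π : Setoid (Fin n)) (i : Fin n) :
    minb π (minb π i) = minb π i := by
  rw [← minb_eq_of_rel π (minb_rel π i)]

lemma rel_iff_minb_eq {n : ℕ} (π : Setoid (Fin n)) (i j : Fin n) :
    π.r i j ↔ minb π i = minb π j := by
  constructor
  · exact minb_eq_of_rel π
  · intro h
    have h1 := minb_rel π i
    have h2 := minb_rel π j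
    rw [h] at h1
    exact π.trans' h1 (π.symm' h2)

noncomputable def phi {n : ℕ} (π : Setoid (Fin n)) : Fin n → ℕ :=
  fun i => if minb π i = i then (blk π i).card / 2 else 0

end Blk

/-- card of `{i : Fin n | i.val < k}` is `k`, for `k ≤ n`. -/
lemma card_filter_val_lt {n k : ℕ} (hk : k ≤ n) :
    (Finset.univ.filter (fun i : Fin n => i.val < k)).card = k := by
  have : (Finset.univ.filter (fun i : Fin n => i.val < k)) =
      Finset.attachFin (Finset.range k) (fun m hm => lt_of_lt_of_le (Finset.mem_range.mp hm) hk) := by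
    ext i
    simp [Finset.mem_attachFin]
  rw [this, Finset.card_attachFin, Finset.card_range]

/-- The fundamental counting identity for `phi`. -/
lemma two_mul_sum_phi {n : ℕ} (π : Setoid (Fin n))
    (hEven : ∀ i, Even (blk π i).card) {k : ℕ} (hk : k ≤ n) :
    2 * (∑ t ∈ Finset.range k, uN (phi π) t) =
      k + (Finset.univ.filter
        (fun i : Fin n => k ≤ i.val ∧ (minb π i).val < k)).card := by
  classical
  have h1 : (∑ t ∈ Finset.range k, uN (phi π) t) =
      ∑ i ∈ Finset.univ.filter (fun i : Fin n => i.val < k), phi π i := by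
    symm
    refine Finset.sum_bij (fun (i : Fin n) _ => i.val) ?_ ?_ ?_ ?_
    · intro a ha
      exact Finset.mem_range.mpr (Finset.mem_filter.mp ha).2
    · intro a _ b _ h
      exact Fin.ext h
    · intro b hb
      have hbn : b < n := lt_of_lt_of_le (Finset.mem_range.mp hb) hk
      exact ⟨⟨b, hbn⟩, Finset.mem_filter.mpr ⟨Finset.mem_univ _,
        Finset.mem_range.mp hb⟩, rfl⟩
    · intro a _
      exact (uN_coe (phi π) a).symm
  -- step 2 : restrict to minima
  have h2 : ∑ i ∈ Finset.univ.filter (fun i : Fin n => i.val < k), phi π i =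
      ∑ m ∈ Finset.univ.filter (fun m : Fin n => m.val < k ∧ minb π m = m),
        (blk π m).card / 2 := by
    rw [show (Finset.univ.filter (fun m : Fin n => m.val < k ∧ minb π m = m)) =
        (Finset.univ.filter (fun i : Fin n => i.val < k)).filter
          (fun m => minb π m = m) by rw [Finset.filter_filter]]
    conv_rhs => rw [Finset.sum_filter]
    exact Finset.sum_congr rfl (fun i _ => by simp [phi])
  -- step 3 : use evenness
  have h3 : 2 * ∑ m ∈ Finset.univ.filter (fun m : Fin n => m.val < k ∧ minb π m = m),
        (blk π m).card / 2 =
      ∑ m ∈ Finset.univ.filter (fun m : Fin n => m.val < k ∧ minb π m = m),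
        (blk π m).card := by
    rw [Finset.mul_sum]
    refine Finset.sum_congr rfl (fun m _ => ?_)
    exact Nat.mul_div_cancel' (hEven m).two_dvd
  -- step 4 : fiberwise count
  have h4 : ∑ m ∈ Finset.univ.filter (fun m : Fin n => m.val < k ∧ minb π m = m),
        (blk π m).card =
      (Finset.univ.filter (fun j : Fin n => (minb π j).val < k)).card := by
    rw [Finset.card_eq_sum_card_fiberwise
      (f := minb π)
      (t := Finset.univ.filter (fun m : Fin n => m.val < k ∧ minb π m = m))
      (fun j hj => by
        have := (Finset.mem_filter.mp hj).2
        exact Finset.mem_filter.mpr ⟨Finset.mem_univ _, this, minb_minb π j⟩)]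
    refine Finset.sum_congr rfl (fun m hm => ?_)
    have hm' := (Finset.mem_filter.mp hm).2
    congr 1
    ext j
    simp only [Finset.mem_filter, Finset.mem_univ, true_and, mem_blk]
    constructor
    · intro h
      have hmj := minb_eq_of_rel π h
      rw [hm'.2] at hmj
      exact ⟨by rw [← hmj]; exact hm'.1, hmj.symm⟩
    · rintro ⟨_, h⟩
      rw [rel_iff_minb_eq, hm'.2, h]
  -- step 5 : split the count
  have h5 : (Finset.univ.filter (fun j : Fin n => (minb π j).val < k)).card =
      k + (Finset.univ.filter
        (fun i : Fin n => k ≤ i.val ∧ (minb π i).val < k)).card := by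
    rw [← Finset.card_filter_add_card_filter_not
      (s := Finset.univ.filter (fun j : Fin n => (minb π j).val < k))
      (p := fun j => j.val < k)]
    have ea : ((Finset.univ.filter (fun j : Fin n => (minb π j).val < k)).filter
        (fun j : Fin n => j.val < k)) = Finset.univ.filter (fun a : Fin n => a.val < k) := by
      ext a
      simp only [Finset.filter_filter, Finset.mem_filter, Finset.mem_univ, true_and]
      exact ⟨fun h => h.2, fun h => ⟨lt_of_le_of_lt (Fin.le_def.mp (minb_le π a)) h, h⟩⟩
    have eb : ((Finset.univ.filter (fun j : Fin n => (minb π j).val < k)).filter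
        (fun j : Fin n => ¬ j.val < k)) =
        Finset.univ.filter (fun i : Fin n => k ≤ i.val ∧ (minb π i).val < k) := by
      ext a
      simp only [Finset.filter_filter, Finset.mem_filter, Finset.mem_univ, true_and]
      omega
    rw [ea, eb, card_filter_val_lt hk]
  omega

/-! ### `Hh` of `phi` counts open blocks -/

lemma Hh_phi_eq {n : ℕ} (π : Setoid (Fin n)) (hEven : ∀ i, Even (blk π i).card)
    {k : ℕ} (hk : k ≤ n) :
    Hh (phi π) k = ((Finset.univ.filter
      (fun i : Fin n => k ≤ i.val ∧ (minb π i).val < k)).card : ℤ) := by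
  have h := two_mul_sum_phi π hEven hk
  unfold Hh
  have hcast : (2 : ℤ) * (∑ t ∈ Finset.range k, (uN (phi π) t : ℤ)) =
      ((2 * ∑ t ∈ Finset.range k, uN (phi π) t : ℕ) : ℤ) := by push_cast; ring
  rw [hcast, h]
  push_cast; ring

lemma sum_uN_univ {n : ℕ} (u : Fin n → ℕ) :
    ∑ t ∈ Finset.range n, uN u t = ∑ i, u i := by
  rw [← Fin.sum_univ_eq_sum_range (fun t => uN u t) n]
  exact Finset.sum_congr rfl (fun i _ => uN_coe u i)

lemma good_phi {n : ℕ} (π : Setoid (Fin n)) (hEven : ∀ i, Even (blk π i).card) :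
    GoodW (phi π) := by
  constructor
  · have h := two_mul_sum_phi π hEven (le_refl n)
    have hempty : (Finset.univ.filter
        (fun i : Fin n => n ≤ i.val ∧ (minb π i).val < n)) = ∅ := by
      apply Finset.eq_empty_of_forall_notMem
      intro i hi
      have h2 := (Finset.mem_filter.mp hi).2.1
      have := i.isLt
      omega
    rw [hempty] at h
    rw [← sum_uN_univ]
    simpa using h
  · intro k hk
    rw [Hh_phi_eq π hEven hk]
    exact Int.natCast_nonneg _

/-! ### For a noncrossing even partition, `ou (phi π)` recovers the block minimum -/

lemma not_rel_of_mins {n : ℕ} {π : Setoid (Fin n)} {x y : Fin n}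
    (hx : minb π x = x) (hy : minb π y = y) (hne : x ≠ y) : ¬ π.r x y := by
  intro hr
  exact hne (by rw [← hx, ← hy]; exact minb_eq_of_rel π hr)

lemma ou_phi_eq_minb {n : ℕ} {π : Setoid (Fin n)} (hnc : IsNoncrossing π)
    (hEven : ∀ i, Even (blk π i).card) (i : Fin n) :
    ou (phi π) i = minb π i := by
  by_cases hmin : minb π i = i
  · have hu : phi π i ≠ 0 := by
      simp only [phi, if_pos hmin]
      have hpos : 0 < (blk π i).card := Finset.card_pos.mpr ⟨i, self_mem_blk π i⟩
      rcases hEven i with ⟨c, hc⟩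
      omega
    rw [ou_eq_self _ _ hu, hmin]
  · have hmlt : (minb π i).val < i.val :=
      lt_of_le_of_ne (Fin.le_def.mp (minb_le π i)) (fun h => hmin (Fin.ext h))
    have hu : phi π i = 0 := by simp [phi, hmin]
    have hmm : minb π (minb π i) = minb π i := minb_minb π i
    -- (a) strict inequality of heights
    have ha : Hh (phi π) (minb π i).val < Hh (phi π) i.val := by
      rw [Hh_phi_eq π hEven (le_of_lt (minb π i).isLt),
        Hh_phi_eq π hEven (le_of_lt i.isLt)]
      have hsub : (Finset.univ.filter
          (fun i' : Fin n => (minb π i).val ≤ i'.val ∧ (minb π i').val < (minb π i).val))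
          ⊆ (Finset.univ.filter
          (fun i' : Fin n => i.val ≤ i'.val ∧ (minb π i').val < i.val)) := by
        intro i' hi'
        rcases Finset.mem_filter.mp hi' with ⟨_, hm1, hm2⟩
        refine Finset.mem_filter.mpr ⟨Finset.mem_univ _, ?_, by omega⟩
        by_contra hlt
        push_neg at hlt
        -- i' < i ; derive a crossing
        have hne : i' ≠ minb π i := by
          intro h
          rw [h, hmm] at hm2
          omega
        have h1 : (minb π i).val < i'.val := lt_of_le_of_ne hm1 (fun h => hne (Fin.ext h.symm))
        have hb'm : (minb π i') ≠ minb π i := fun h => by rw [h] at hm2; omega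
        exact hnc ⟨minb π i', minb π i, i', i,
          Fin.lt_def.mpr hm2, Fin.lt_def.mpr h1, Fin.lt_def.mpr hlt,
          π.symm' (minb_rel π i'), π.symm' (minb_rel π i),
          not_rel_of_mins (minb_minb π i') hmm hb'm⟩
      have hmem : i ∈ (Finset.univ.filter
          (fun i' : Fin n => i.val ≤ i'.val ∧ (minb π i').val < i.val)) :=
        Finset.mem_filter.mpr ⟨Finset.mem_univ _, le_refl _, hmlt⟩
      have hnmem : i ∉ (Finset.univ.filter
          (fun i' : Fin n => (minb π i).val ≤ i'.val ∧ (minb π i').val < (minb π i).val)) := by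
        intro hcon
        have := (Finset.mem_filter.mp hcon).2.2
        omega
      have := (Finset.ssubset_iff_of_subset hsub).mpr ⟨i, hmem, hnmem⟩
      exact_mod_cast Finset.card_lt_card this
    -- (b) heights in between are at least `Hh i`
    have hb : ∀ k : ℕ, (minb π i).val < k → k < i.val →
        Hh (phi π) i.val ≤ Hh (phi π) k := by
      intro k hk1 hk2
      have hkn : k ≤ n := le_of_lt (lt_trans hk2 i.isLt)
      rw [Hh_phi_eq π hEven (le_of_lt i.isLt), Hh_phi_eq π hEven hkn]
      have hsub : (Finset.univ.filter
          (fun i' : Fin n => i.val ≤ i'.val ∧ (minb π i').val < i.val))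
          ⊆ (Finset.univ.filter
          (fun i' : Fin n => k ≤ i'.val ∧ (minb π i').val < k)) := by
        intro i' hi'
        rcases Finset.mem_filter.mp hi' with ⟨_, hm1, hm2⟩
        refine Finset.mem_filter.mpr ⟨Finset.mem_univ _, by omega, ?_⟩
        by_contra hge
        push_neg at hge
        -- k ≤ minb i' < i ≤ i'
        have hne : i' ≠ i := by
          intro h
          rw [h] at hge
          omega
        have hii' : i.val < i'.val := lt_of_le_of_ne hm1 (fun h => hne (Fin.ext h.symm))
        have hbm : (minb π i') ≠ minb π i := by
          intro h
          rw [h] at hge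
          omega
        exact hnc ⟨minb π i, minb π i', i, i',
          Fin.lt_def.mpr (by omega), Fin.lt_def.mpr hm2, Fin.lt_def.mpr hii',
          π.symm' (minb_rel π i), π.symm' (minb_rel π i'),
          not_rel_of_mins hmm (minb_minb π i') (fun h => hbm h.symm)⟩
      exact_mod_cast Finset.card_le_card hsub
    -- conclude : the max' of Tt is exactly minb i
    have hgood := good_phi π hEven
    apply Fin.ext
    rw [ou_spec hgood hu]
    apply le_antisymm
    · apply Finset.max'_le
      intro y hy
      rcases Finset.mem_filter.mp hy with ⟨hy1, hy2⟩
      have hy1' := Finset.mem_range.mp hy1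
      by_contra hgt
      push_neg at hgt
      exact absurd (hb y hgt hy1') (not_le.mpr hy2)
    · exact Finset.le_max' _ _
        (Finset.mem_filter.mpr ⟨Finset.mem_range.mpr hmlt, ha⟩)

lemma ker_ou_phi {n : ℕ} {π : Setoid (Fin n)} (hnc : IsNoncrossing π)
    (hEven : ∀ i, Even (blk π i).card) :
    Setoid.ker (ou (phi π)) = π := by
  apply Setoid.ext
  intro a b
  have : (Setoid.ker (ou (phi π))).r a b ↔ ou (phi π) a = ou (phi π) b := Iff.rfl
  rw [this, ou_phi_eq_minb hnc hEven a, ou_phi_eq_minb hnc hEven b]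
  exact (rel_iff_minb_eq π a b).symm

/-! ### Surjectivity side -/

lemma blk_ker_eq_fib {n : ℕ} (u : Fin n → ℕ) (i : Fin n) :
    blk (Setoid.ker (ou u)) i = fib u (ou u i) := by
  ext j
  rw [mem_blk]
  simp only [fib, Finset.mem_filter, Finset.mem_univ, true_and]
  exact ⟨fun h => (h : ou u i = ou u j).symm, fun h => (h.symm : (Setoid.ker (ou u)).r i j)⟩

lemma minb_ker {n : ℕ} {u : Fin n → ℕ} (hg : GoodW u) (i : Fin n) :
    minb (Setoid.ker (ou u)) i = ou u i := by
  apply le_antisymm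
  · exact Finset.min'_le _ _ ((mem_blk _ _ _).2 (show ou u i = ou u (ou u i) from (ou_ou hg i).symm))
  · have hmem := Finset.min'_mem (blk (Setoid.ker (ou u)) i) ⟨i, self_mem_blk _ i⟩
    rw [mem_blk] at hmem
    have h1 : ou u i = ou u (minb (Setoid.ker (ou u)) i) := hmem
    rw [h1]
    exact ou_le u _

lemma even_blk_ker {n : ℕ} {u : Fin n → ℕ} (hg : GoodW u) (i : Fin n) :
    Even (blk (Setoid.ker (ou u)) i).card := by
  rw [blk_ker_eq_fib, fib_card hg]
  exact even_two_mul _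

lemma phi_ker {n : ℕ} {u : Fin n → ℕ} (hg : GoodW u) :
    phi (Setoid.ker (ou u)) = u := by
  funext i
  by_cases h : ou u i = i
  · have hmin : minb (Setoid.ker (ou u)) i = i := by rw [minb_ker hg, h]
    simp only [phi, if_pos hmin]
    rw [blk_ker_eq_fib, fib_card hg, h]
    omega
  · have hu : u i = 0 := u_eq_zero_of_ou_lt h
    have hmin : minb (Setoid.ker (ou u)) i ≠ i := by rw [minb_ker hg]; exact h
    simp [phi, hmin, hu]

/-! ### The cycle lemma -/

def vN {m : ℕ} (v : Fin (m+1) → ℕ) : ℕ → ℕ :=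
  fun t => v ⟨t % (m+1), Nat.mod_lt _ (Nat.succ_pos m)⟩

def Jh {m : ℕ} (v : Fin (m+1) → ℕ) (k : ℕ) : ℤ :=
  2 * (∑ t ∈ Finset.range k, (vN v t : ℤ)) - k

def shf {m : ℕ} (r : Fin (m+1)) (v : Fin (m+1) → ℕ) : Fin (m+1) → ℕ :=
  fun j => v (j + r)

lemma Jh_zero {m : ℕ} (v : Fin (m+1) → ℕ) : Jh v 0 = 0 := by simp [Jh]

lemma Jh_succ {m : ℕ} (v : Fin (m+1) → ℕ) (k : ℕ) :
    Jh v (k + 1) = Jh v k + 2 * (vN v k) - 1 := by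
  simp [Jh, Finset.sum_range_succ]; ring

lemma vN_period {m : ℕ} (v : Fin (m+1) → ℕ) (t : ℕ) :
    vN v (t + (m+1)) = vN v t := by
  simp [vN, Nat.add_mod_right]

lemma shf_shf {m : ℕ} (r s : Fin (m+1)) (v : Fin (m+1) → ℕ) :
    shf r (shf s v) = shf (s + r) v := by
  funext j
  simp only [shf]
  congr 1
  rw [add_assoc, add_comm r s]

lemma shf_zero {m : ℕ} (v : Fin (m+1) → ℕ) : shf 0 v = v := by
  funext j; simp [shf]

lemma sum_shf {m : ℕ} (r : Fin (m+1)) (v : Fin (m+1) → ℕ) :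
    ∑ j, shf r v j = ∑ j, v j := by
  exact Fintype.sum_equiv (Equiv.addRight r) _ _ (fun j => rfl)

lemma vN_shf {m : ℕ} (r : Fin (m+1)) (v : Fin (m+1) → ℕ) (t : ℕ) :
    vN (shf r v) t = vN v (t + r.val) := by
  simp only [vN, shf]
  congr 1
  rw [Fin.add_def]
  apply Fin.ext
  simp only []
  rw [Nat.add_mod t r.val]
  rw [Nat.mod_eq_of_lt r.isLt]

lemma sum_Ico_period {m : ℕ} (v : Fin (m+1) → ℕ) (k : ℕ) :
    ∑ t ∈ Finset.Ico k (k + (m+1)), (vN v t : ℤ) = ∑ i, (v i : ℤ) := by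
  induction k with
  | zero =>
    rw [Nat.zero_add, ← Finset.range_eq_Ico]
    rw [← Fin.sum_univ_eq_sum_range (fun t => (vN v t : ℤ)) (m+1)]
    refine Finset.sum_congr rfl (fun i _ => ?_)
    congr 1
    simp [vN, Nat.mod_eq_of_lt i.isLt]
  | succ k ih =>
    have h1 : ∑ t ∈ Finset.Ico k (k + (m+1)), (vN v t : ℤ) =
        (vN v k : ℤ) + ∑ t ∈ Finset.Ico (k+1) (k + (m+1)), (vN v t : ℤ) :=
      Finset.sum_eq_sum_Ico_succ_bot (by omega) _
    have h2 : ∑ t ∈ Finset.Ico (k+1) (k + 1 + (m+1)), (vN v t : ℤ) =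
        (∑ t ∈ Finset.Ico (k+1) (k + (m+1)), (vN v t : ℤ)) + vN v (k + (m+1)) := by
      have : k + 1 + (m + 1) = (k + (m+1)) + 1 := by omega
      rw [this, Finset.sum_Ico_succ_top (by omega)]
    rw [h2, vN_period] at *
    omega

lemma Jh_period {m : ℕ} {v : Fin (m+1) → ℕ} (hsum : 2 * ∑ i, v i = m) (k : ℕ) :
    Jh v (k + (m+1)) = Jh v k - 1 := by
  have h1 : ∑ t ∈ Finset.range (k + (m+1)), (vN v t : ℤ) =
      (∑ t ∈ Finset.range k, (vN v t : ℤ)) + ∑ t ∈ Finset.Ico k (k + (m+1)), (vN v t : ℤ) := by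
    rw [Finset.sum_range_add_sum_Ico _ (by omega : k ≤ k + (m+1))]
  have h2 := sum_Ico_period v k
  have h3 : (2:ℤ) * ∑ i, (v i : ℤ) = m := by exact_mod_cast hsum
  simp only [Jh]
  rw [h1, h2]
  push_cast
  linarith

lemma Jh_shf {m : ℕ} (r : Fin (m+1)) (v : Fin (m+1) → ℕ) (k : ℕ) :
    Jh (shf r v) k = Jh v (r.val + k) - Jh v r.val := by
  simp only [Jh]
  have h1 : ∑ t ∈ Finset.range k, (vN (shf r v) t : ℤ) =
      ∑ t ∈ Finset.Ico r.val (r.val + k), (vN v t : ℤ) := by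
    rw [Finset.sum_Ico_eq_sum_range]
    simp only [Nat.add_sub_cancel_left]
    refine Finset.sum_congr rfl (fun t _ => ?_)
    rw [vN_shf, Nat.add_comm]
  have h2 : ∑ t ∈ Finset.Ico r.val (r.val + k), (vN v t : ℤ) =
      (∑ t ∈ Finset.range (r.val + k), (vN v t : ℤ)) -
        ∑ t ∈ Finset.range r.val, (vN v t : ℤ) := by
    rw [Finset.sum_Ico_eq_sub _ (by omega : r.val ≤ r.val + k)]
  rw [h1, h2]
  push_cast
  ring

/-- `w` extends a good word: all proper prefix heights are nonnegative. -/
def ExtW {m : ℕ} (w : Fin (m+1) → ℕ) : Prop := ∀ k ≤ m, 0 ≤ Jh w k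

lemma extW_shift_iff {m : ℕ} {v : Fin (m+1) → ℕ} (hsum : 2 * ∑ i, v i = m)
    (r : Fin (m+1)) :
    ExtW (shf r v) ↔ ((∀ s, r.val < s → s ≤ m → Jh v r.val ≤ Jh v s) ∧
      (∀ s < r.val, Jh v r.val < Jh v s)) := by
  have hshf : ∀ k, Jh (shf r v) k = Jh v (r.val + k) - Jh v r.val := Jh_shf r v
  constructor
  · intro hE
    constructor
    · intro s hs1 hs2
      have hk := hE (s - r.val) (by omega)
      rw [hshf] at hk
      have : r.val + (s - r.val) = s := by omega
      rw [this] at hk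
      omega
    · intro s hs
      have hk := hE (s + (m + 1) - r.val) (by have := r.isLt; omega)
      rw [hshf] at hk
      have : r.val + (s + (m + 1) - r.val) = s + (m+1) := by have := r.isLt; omega
      rw [this, Jh_period hsum] at hk
      omega
  · rintro ⟨h1, h2⟩ k hk
    rw [hshf]
    rcases Nat.lt_or_ge (r.val + k) (m + 1) with hc | hc
    · rcases Nat.eq_zero_or_pos k with h0 | h0
      · subst h0; simp
      · have := h1 (r.val + k) (by omega) (by omega)
        omega
    · have hs : r.val + k = (r.val + k - (m+1)) + (m+1) := by omega
      have hslt : r.val + k - (m+1) < r.val := by have := r.isLt; omega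
      have := h2 _ hslt
      rw [hs, Jh_period hsum]
      omega

lemma exists_unique_good_shift {m : ℕ} {v : Fin (m+1) → ℕ}
    (hsum : 2 * ∑ i, v i = m) : ∃! r : Fin (m+1), ExtW (shf r v) := by
  -- the set of minimizers of `Jh v` on `range (m+1)`
  classical
  have hne : (Finset.range (m+1)).Nonempty := ⟨0, Finset.mem_range.mpr (by omega)⟩
  obtain ⟨s0, hs0mem, hs0min⟩ := Finset.exists_min_image (Finset.range (m+1)) (Jh v) hne
  set A := (Finset.range (m+1)).filter (fun s => ∀ t < m + 1, Jh v s ≤ Jh v t) with hA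
  have hAne : A.Nonempty := ⟨s0, Finset.mem_filter.mpr ⟨hs0mem,
    fun t ht => hs0min t (Finset.mem_range.mpr ht)⟩⟩
  set r0 := A.min' hAne with hr0
  have hr0mem := A.min'_mem hAne
  rw [Finset.mem_filter] at hr0mem
  have hr0lt : r0 < m + 1 := Finset.mem_range.mp hr0mem.1
  have hr0min : ∀ t < m + 1, Jh v r0 ≤ Jh v t := hr0mem.2
  refine ⟨⟨r0, hr0lt⟩, ?_, ?_⟩
  · show ExtW (shf ⟨r0, hr0lt⟩ v)
    rw [extW_shift_iff hsum]
    simp only [Fin.val_mk]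
    constructor
    · intro s hs1 hs2
      exact hr0min s (by omega)
    · intro s hs
      rcases lt_or_eq_of_le (hr0min s (by omega)) with h | h
      · exact h
      · exfalso
        have hsA : s ∈ A := Finset.mem_filter.mpr ⟨Finset.mem_range.mpr (by omega),
          fun t ht => by rw [← h]; exact hr0min t ht⟩
        have := A.min'_le s hsA
        omega
  · intro r hr
    have hr2 : ExtW (shf r v) := hr
    rw [extW_shift_iff hsum] at hr2
    by_contra hne'
    have hrlt := r.isLt
    rcases lt_trichotomy r.val r0 with h | h | h
    · -- r < r0 : r0's property (ii) gives Jh r0 < Jh r ; but r's property (i) gives Jh r ≤ Jh r0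
      have ha := hr2.1 r0 h (by omega)
      have hb : Jh v r0 ≤ Jh v r.val := hr0min r.val (by omega)
      -- then r is also a minimizer, contradicting minimality of r0
      have hrA : r.val ∈ A := Finset.mem_filter.mpr ⟨Finset.mem_range.mpr (by omega),
        fun t ht => by
          have := hr0min t ht
          omega⟩
      have := A.min'_le r.val hrA
      omega
    · exact hne' (Fin.ext h)
    · have ha := hr2.2 r0 h
      have hb : Jh v r0 ≤ Jh v r.val := hr0min r.val (by omega)
      omega

/-! ### Extension / restriction -/

lemma sum_vN_univ {m : ℕ} (v : Fin (m+1) → ℕ) :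
    ∑ t ∈ Finset.range (m+1), (vN v t : ℤ) = ∑ i, (v i : ℤ) := by
  have := sum_Ico_period v 0
  rwa [Nat.zero_add, ← Finset.range_eq_Ico] at this

lemma vN_eq_uN_castSucc {m : ℕ} (w : Fin (m+1) → ℕ) {t : ℕ} (ht : t < m) :
    vN w t = uN (w ∘ Fin.castSucc) t := by
  unfold vN uN
  rw [dif_pos ht]
  show w _ = w _
  congr 1
  apply Fin.ext
  simp [Nat.mod_eq_of_lt (show t < m+1 by omega)]

lemma Jh_eq_Hh {m : ℕ} (w : Fin (m+1) → ℕ) {k : ℕ} (hk : k ≤ m) :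
    Jh w k = Hh (w ∘ Fin.castSucc) k := by
  have hs : ∑ t ∈ Finset.range k, (vN w t : ℤ) =
      ∑ t ∈ Finset.range k, (uN (w ∘ Fin.castSucc) t : ℤ) := by
    refine Finset.sum_congr rfl (fun t ht => ?_)
    rw [vN_eq_uN_castSucc w (lt_of_lt_of_le (Finset.mem_range.mp ht) hk)]
  simp [Jh, Hh, hs]

lemma extW_iff_goodW {m : ℕ} {w : Fin (m+1) → ℕ} (hsum : 2 * ∑ i, w i = m) :
    ExtW w ↔ (GoodW (w ∘ Fin.castSucc) ∧ w (Fin.last m) = 0) := by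
  have hsum' : ∑ i : Fin (m+1), w i = ∑ i : Fin m, (w ∘ Fin.castSucc) i + w (Fin.last m) :=
    Fin.sum_univ_castSucc w
  have hJm1 : Jh w (m+1) = -1 := by
    have h2 : (2:ℤ) * ∑ i, (w i : ℤ) = m := by exact_mod_cast hsum
    unfold Jh
    rw [sum_vN_univ]
    push_cast
    linarith
  have hvNm : vN w m = w (Fin.last m) := by
    unfold vN
    congr 1
    apply Fin.ext
    simp [Nat.mod_eq_of_lt (show m < m+1 by omega)]
  constructor
  · intro hE
    have hJm : 0 ≤ Jh w m := hE m le_rfl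
    have hstep := Jh_succ w m
    rw [hJm1, hvNm] at hstep
    have hlast : w (Fin.last m) = 0 := by omega
    refine ⟨⟨?_, ?_⟩, hlast⟩
    · rw [hlast] at hsum'
      omega
    · intro k hk
      rw [← Jh_eq_Hh w hk]
      exact hE k hk
  · rintro ⟨hg, hlast⟩ k hk
    rw [Jh_eq_Hh w hk]
    exact hg.2 k hk

/-- The backward map of the cycle lemma. -/
noncomputable def cycMap (m : ℕ) (p : Fin (m+1) × {u : Fin m → ℕ // GoodW u}) :
    {v : Fin (m+1) → ℕ // 2 * ∑ i, v i = m} :=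
  ⟨shf (-p.1) (Fin.snoc p.2.1 0), by
    rw [sum_shf]
    rw [Fin.sum_univ_castSucc (Fin.snoc p.2.1 0)]
    simp only [Fin.snoc_castSucc, Fin.snoc_last]
    have := p.2.2.1
    omega⟩

lemma snoc_sum {m : ℕ} (u : Fin m → ℕ) :
    2 * ∑ i, (Fin.snoc u 0 : Fin (m+1) → ℕ) i = m ↔ 2 * ∑ i, u i = m := by
  rw [Fin.sum_univ_castSucc (Fin.snoc u 0)]
  simp only [Fin.snoc_castSucc, Fin.snoc_last]
  omega

lemma extW_snoc {m : ℕ} {u : Fin m → ℕ} (hg : GoodW u) :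
    ExtW (Fin.snoc u 0 : Fin (m+1) → ℕ) := by
  have hsum : 2 * ∑ i, (Fin.snoc u 0 : Fin (m+1) → ℕ) i = m := (snoc_sum u).mpr hg.1
  rw [extW_iff_goodW hsum]
  refine ⟨?_, Fin.snoc_last _ _⟩
  have : (Fin.snoc u 0 : Fin (m+1) → ℕ) ∘ Fin.castSucc = u := by
    funext i; simp [Fin.snoc_castSucc]
  rwa [this]

lemma cycMap_bijective (m : ℕ) : Function.Bijective (cycMap m) := by
  constructor
  · rintro ⟨r, u, hu⟩ ⟨r', u', hu'⟩ heq
    have hveq : shf (-r) (Fin.snoc u 0) = shf (-r') (Fin.snoc u' 0) :=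
      congrArg Subtype.val heq
    set v : Fin (m+1) → ℕ := shf (-r) (Fin.snoc u 0) with hv
    have hvsum : 2 * ∑ i, v i = m := (cycMap m (r, ⟨u, hu⟩)).2
    have hw : shf r v = Fin.snoc u 0 := by
      rw [hv, shf_shf, neg_add_cancel, shf_zero]
    have hw' : shf r' v = Fin.snoc u' 0 := by
      rw [show v = shf (-r') (Fin.snoc u' 0) from hveq, shf_shf, neg_add_cancel, shf_zero]
    have hE : ExtW (shf r v) := by rw [hw]; exact extW_snoc hu
    have hE' : ExtW (shf r' v) := by rw [hw']; exact extW_snoc hu'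
    obtain ⟨r0, -, hr0uniq⟩ := exists_unique_good_shift hvsum
    have h1 : r = r0 := hr0uniq r hE
    have h2 : r' = r0 := hr0uniq r' hE'
    have hrr : r = r' := h1.trans h2.symm
    rw [← hrr] at hw'
    have huu : u = u' := by
      funext i
      have := congrFun (hw.symm.trans hw') (Fin.castSucc i)
      simpa [Fin.snoc_castSucc] using this
    subst huu
    subst hrr
    rfl
  · rintro ⟨v, hv⟩
    obtain ⟨r, hr, -⟩ := exists_unique_good_shift hv
    have hwsum : 2 * ∑ i, shf r v i = m := by rw [sum_shf]; exact hv
    have hE : ExtW (shf r v) := hr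
    rw [extW_iff_goodW hwsum] at hE
    refine ⟨(r, ⟨(shf r v) ∘ Fin.castSucc, hE.1⟩), ?_⟩
    apply Subtype.ext
    show shf (-r) (Fin.snoc ((shf r v) ∘ Fin.castSucc) 0) = v
    have hsnoc : (Fin.snoc ((shf r v) ∘ Fin.castSucc) 0 : Fin (m+1) → ℕ) = shf r v := by
      funext j
      induction j using Fin.lastCases with
      | last => rw [Fin.snoc_last, hE.2]
      | cast i => rw [Fin.snoc_castSucc]; rfl
    rw [hsnoc, shf_shf, add_neg_cancel, shf_zero]

lemma card_cycle (m : ℕ) :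
    Nat.card {v : Fin (m+1) → ℕ // 2 * ∑ i, v i = m} =
      (m + 1) * Nat.card {u : Fin m → ℕ // GoodW u} := by
  rw [← Nat.card_congr (Equiv.ofBijective _ (cycMap_bijective m))]
  rw [Nat.card_prod]
  congr 1
  simp [Nat.card_eq_fintype_card]

/-! ### Stars and bars -/

lemma card_V_choose (l : ℕ) :
    Nat.card {v : Fin (2*l+1) → ℕ // 2 * ∑ i, v i = 2*l} = (3*l).choose l := by
  classical
  have e1 : {v : Fin (2*l+1) → ℕ // 2 * ∑ i, v i = 2*l} ≃
      {v : Fin (2*l+1) → ℕ // ∑ i, v i = l} :=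
    Equiv.subtypeEquivRight (fun v => by constructor <;> (intro h; omega))
  have e2 := (Sym.equivNatSumOfFintype (Fin (2*l+1)) l).symm
  rw [Nat.card_congr (e1.trans e2)]
  rw [Nat.card_eq_fintype_card, Sym.card_sym_eq_choose, Fintype.card_fin]
  congr 1
  omega

/-! ### Main glue -/

lemma natCard_rel_eq_blk {n : ℕ} (π : Setoid (Fin n)) (i : Fin n) :
    Nat.card {j : Fin n // π.r i j} = (blk π i).card := by
  classical
  rw [Nat.card_eq_fintype_card, Fintype.card_subtype]
  congr 1

lemma card_partitions_eq_good (n : ℕ) :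
    Nat.card {π : Setoid (Fin n) // IsNoncrossing π ∧
        ∀ i, Even (Nat.card {j : Fin n // π.r i j})} =
      Nat.card {u : Fin n → ℕ // GoodW u} := by
  have e1 : {π : Setoid (Fin n) // IsNoncrossing π ∧
        ∀ i, Even (Nat.card {j : Fin n // π.r i j})}
      ≃ {π : Setoid (Fin n) // IsNoncrossing π ∧ ∀ i, Even (blk π i).card} :=
    Equiv.subtypeEquivRight (fun π => by
      constructor <;> (rintro ⟨h1, h2⟩; refine ⟨h1, fun i => ?_⟩)
      · rw [← natCard_rel_eq_blk]; exact h2 i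
      · rw [natCard_rel_eq_blk]; exact h2 i)
  rw [Nat.card_congr e1]
  apply Nat.card_congr
  refine Equiv.ofBijective (fun p => ⟨phi p.1, good_phi p.1 p.2.2⟩) ⟨?_, ?_⟩
  · rintro ⟨π1, h1⟩ ⟨π2, h2⟩ heq
    have h' : phi π1 = phi π2 := congrArg Subtype.val heq
    apply Subtype.ext
    show π1 = π2
    rw [← ker_ou_phi h1.1 h1.2, ← ker_ou_phi h2.1 h2.2, h']
  · rintro ⟨u, hu⟩
    exact ⟨⟨Setoid.ker (ou u), nc_ker hu, even_blk_ker hu⟩, Subtype.ext (phi_ker hu)⟩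


/-- The number of noncrossing partitions of `{1,…,2l}` with all blocks of even size equals
the Fuss–Catalan number `(1/(2l+1))·binom(3l,l)`. -/
theorem card_nc_even_partitions_eq_fussCatalan (l : ℕ) :
    (2 * l + 1) * Nat.card {π : Setoid (Fin (2 * l)) //
        IsNoncrossing π ∧ ∀ i, Even (Nat.card {j : Fin (2 * l) // π.r i j})} =
      (3 * l).choose l := by
  rw [card_partitions_eq_good (2*l), ← card_V_choose l, card_cycle (2*l)]
end
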